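/- arXiv:2109.09110 — 5 statements merged into one kernel-verified Lean document; each statement's English description precedes it below -/
import Mathlib

section
/- Let n ≥ 2, let m_1, …, m_n be positive real numbers, and fix k₁ ∈ {1, …, n−1}. Let q_1, …, q_{n-1} ∈ ℝ² be pairwise distinct points, define q_n = −(1/m_n) · Σ_{i=1}^{n-1} m_i q_i, and assume q_n ≠ q_i for i = 1, …, n−1. Suppose that: (i) for every i ∈ {1, …, n−1} with i ≠ k₁, q_i = Σ_{j≠i} (m_j / |q_i − q_j|³)(q_i − q_j); (ii) the first (x) component of the equation holds for body k₁, i.e. x_{k₁} = Σ_{j≠k₁} (m_j / |q_{k₁} − q_j|³)(x_{k₁} − x_j); and (iii) x_{k₁} ≠ x_n, where x_i denotes the first coordinate of q_i. Then (q_1, …, q_n) is a normalized central configuration, i.e. q_i = Σ_{j≠i} (m_j / |q_i − q_j|³)(q_i − q_j) holds for every i = 1, …, n. -/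
open Finset

abbrev E2 : Type := EuclideanSpace ℝ (Fin 2)

/-- solutions of the reduced system ℛ𝒮 (the full equations for all bodies
`i ≠ k₁` among the first `n`, the `x`-component of the equation for body `k₁`, and the
center-of-mass condition determining the last body), with `x_{k₁} ≠ x_last`, are
normalized central configurations. Here there are `n + 1` bodies, `n ≥ 1`. -/
theorem stmt2 (n : ℕ) (hn : 1 ≤ n) (m : Fin (n + 1) → ℝ) (hm : ∀ i, 0 < m i)
    (k₁ : Fin n)
    (q : Fin (n + 1) → E2)
    (hdist : ∀ i j : Fin n, i ≠ j → q i.castSucc ≠ q j.castSucc)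
    (hlast : q (Fin.last n) = (-(m (Fin.last n))⁻¹) • ∑ i : Fin n, m i.castSucc • q i.castSucc)
    (hne : ∀ i : Fin n, q (Fin.last n) ≠ q i.castSucc)
    (heq : ∀ i : Fin n, i ≠ k₁ →
      q i.castSucc = ∑ j ∈ Finset.univ.filter (· ≠ i.castSucc),
        (m j / ‖q i.castSucc - q j‖ ^ 3) • (q i.castSucc - q j))
    (heqx : q k₁.castSucc 0 =
      (∑ j ∈ Finset.univ.filter (· ≠ k₁.castSucc),
        (m j / ‖q k₁.castSucc - q j‖ ^ 3) • (q k₁.castSucc - q j)) 0)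
    (hxne : q k₁.castSucc 0 ≠ q (Fin.last n) 0) :
    ∀ i, q i = ∑ j ∈ Finset.univ.filter (· ≠ i), (m j / ‖q i - q j‖ ^ 3) • (q i - q j) := by
  classical
  set A : Fin (n + 1) → E2 := fun i =>
    ∑ j ∈ Finset.univ.filter (· ≠ i), (m j / ‖q i - q j‖ ^ 3) • (q i - q j) with hA
  set D : Fin (n + 1) → E2 := fun i => q i - A i with hDdef
  suffices hD : ∀ i, D i = 0 by
    intro i
    have := hD i
    rw [hDdef] at this
    simpa [sub_eq_zero] using this
  set h : Fin (n + 1) → Fin (n + 1) → E2 := fun i j =>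
    (m i * m j / ‖q i - q j‖ ^ 3) • (q i - q j) with hh
  have hanti : ∀ i j, h j i = - h i j := by
    intro i j
    rw [hh]
    simp only
    rw [norm_sub_rev (q j), mul_comm (m j), ← neg_sub (q i) (q j), smul_neg]
  have hdiag : ∀ i, h i i = 0 := by intro i; simp [hh]
  have hmA : ∀ i, m i • A i = ∑ j, h i j := by
    intro i
    rw [hA]
    simp only
    rw [Finset.smul_sum]
    rw [Finset.sum_filter]
    refine Finset.sum_congr rfl fun j _ => ?_
    by_cases hij : j = i
    · rw [if_neg (by simpa using hij), hij, (hdiag i)]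
    · rw [if_pos hij, smul_smul, mul_div_assoc']
  have hsumA : ∑ i, m i • A i = 0 := by
    have hS : (∑ i, ∑ j, h i j) = - ∑ i, ∑ j, h i j := by
      calc (∑ i, ∑ j, h i j) = ∑ j, ∑ i, h i j := Finset.sum_comm
      _ = ∑ i, ∑ j, h j i := rfl
      _ = ∑ i, ∑ j, - h i j :=
          Finset.sum_congr rfl fun i _ => Finset.sum_congr rfl fun j _ => hanti i j
      _ = - ∑ i, ∑ j, h i j := by simp [Finset.sum_neg_distrib]
    have h2 : (2 : ℝ) • (∑ i, ∑ j, h i j) = 0 := by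
      rw [two_smul]; nth_rewrite 2 [hS]; simp
    have hz := (smul_eq_zero.mp h2).resolve_left (by norm_num)
    calc ∑ i, m i • A i = ∑ i, ∑ j, h i j := Finset.sum_congr rfl fun i _ => hmA i
    _ = 0 := hz
  have hsumq : ∑ i, m i • q i = 0 := by
    rw [Fin.sum_univ_castSucc]
    rw [hlast, smul_smul]
    have hmul : m (Fin.last n) * -(m (Fin.last n))⁻¹ = -1 := by
      rw [mul_neg, mul_inv_cancel₀ (hm _).ne']
    rw [hmul]
    simp
  have hsumD : ∑ i, m i • D i = 0 := by
    have hsplit : ∑ i, m i • D i = (∑ i, m i • q i) - ∑ i, m i • A i := by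
      rw [← Finset.sum_sub_distrib]
      exact Finset.sum_congr rfl fun i _ => by rw [hDdef]; simp [smul_sub]
    rw [hsplit, hsumq, hsumA, sub_zero]
  set cross : E2 → E2 → ℝ := fun u v => u 0 * v 1 - u 1 * v 0 with hcross
  have hcrossA : ∑ i, cross (q i) (m i • A i) = 0 := by
    have key : ∀ i, cross (q i) (m i • A i) = ∑ j, cross (q i) (h i j) := by
      intro i
      rw [hmA]
      rw [hcross]; simp only
      rw [WithLp.ofLp_sum, Finset.sum_apply, Finset.sum_apply, Finset.mul_sum, Finset.mul_sum,
        ← Finset.sum_sub_distrib]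
    have canti : ∀ i j, cross (q j) (h j i) = - cross (q i) (h i j) := by
      intro i j
      rw [hanti, hcross, hh]
      simp only [PiLp.neg_apply, PiLp.smul_apply, smul_eq_mul, PiLp.sub_apply]
      ring
    have hS : (∑ i, ∑ j, cross (q i) (h i j)) = - ∑ i, ∑ j, cross (q i) (h i j) := by
      calc (∑ i, ∑ j, cross (q i) (h i j)) = ∑ j, ∑ i, cross (q i) (h i j) := Finset.sum_comm
      _ = ∑ i, ∑ j, cross (q j) (h j i) := rfl
      _ = ∑ i, ∑ j, - cross (q i) (h i j) :=
          Finset.sum_congr rfl fun i _ => Finset.sum_congr rfl fun j _ => canti i j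
      _ = - ∑ i, ∑ j, cross (q i) (h i j) := by simp [Finset.sum_neg_distrib]
    have hz : (∑ i, ∑ j, cross (q i) (h i j)) = 0 := by linarith
    calc ∑ i, cross (q i) (m i • A i) = ∑ i, ∑ j, cross (q i) (h i j) :=
      Finset.sum_congr rfl fun i _ => key i
    _ = 0 := hz
  have hcrossD : ∑ i, cross (q i) (m i • D i) = 0 := by
    have key : ∀ i, cross (q i) (m i • D i) = - cross (q i) (m i • A i) := by
      intro i
      rw [hDdef, hcross]
      simp only [smul_sub, PiLp.sub_apply, PiLp.smul_apply, smul_eq_mul]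
      ring
    rw [Finset.sum_congr rfl fun i _ => key i, Finset.sum_neg_distrib, hcrossA, neg_zero]
  have hDzero : ∀ i : Fin n, i ≠ k₁ → D i.castSucc = 0 := by
    intro i hi
    rw [hDdef]; simp only
    rw [sub_eq_zero]
    exact heq i hi
  have htwo : m k₁.castSucc • D k₁.castSucc + m (Fin.last n) • D (Fin.last n) = 0 := by
    rw [← hsumD, Fin.sum_univ_castSucc]
    congr 1
    rw [Finset.sum_eq_single k₁ (fun i _ hi => by rw [hDzero i hi, smul_zero])
      (fun hk => absurd (Finset.mem_univ k₁) hk)]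
  set w : E2 := m k₁.castSucc • D k₁.castSucc with hw
  have hlin : m (Fin.last n) • D (Fin.last n) = - w := by
    rw [hw]
    have := htwo
    rwa [add_comm, add_eq_zero_iff_eq_neg] at this
  have hcross2 : cross (q k₁.castSucc) w
      + cross (q (Fin.last n)) (m (Fin.last n) • D (Fin.last n)) = 0 := by
    rw [← hcrossD, Fin.sum_univ_castSucc]
    congr 1
    rw [Finset.sum_eq_single k₁
      (fun i _ hi => by rw [hDzero i hi, smul_zero, hcross]; simp)
      (fun hk => absurd (Finset.mem_univ k₁) hk)]
  have hcross3 : (q k₁.castSucc 0 - q (Fin.last n) 0) * w 1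
      - (q k₁.castSucc 1 - q (Fin.last n) 1) * w 0 = 0 := by
    rw [hlin, hcross] at hcross2
    simp only [PiLp.neg_apply] at hcross2
    linear_combination hcross2
  have hD0 : D k₁.castSucc 0 = 0 := by
    show q k₁.castSucc 0 - A k₁.castSucc 0 = 0
    rw [heqx]
    exact sub_self _
  have hw0 : w 0 = 0 := by
    show (m k₁.castSucc • D k₁.castSucc) 0 = 0
    rw [PiLp.smul_apply, hD0, smul_zero]
  have hw1 : w 1 = 0 := by
    have hx : q k₁.castSucc 0 - q (Fin.last n) 0 ≠ 0 := sub_ne_zero.mpr hxne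
    rw [hw0, mul_zero, sub_zero] at hcross3
    exact (mul_eq_zero.mp hcross3).resolve_left hx
  have hwz : w = 0 := by
    ext c
    fin_cases c
    · simpa using hw0
    · simpa using hw1
  have hDk : D k₁.castSucc = 0 := by
    have := hwz
    rw [hw] at this
    exact (smul_eq_zero.mp this).resolve_left (hm _).ne'
  have hDlast : D (Fin.last n) = 0 := by
    have : m (Fin.last n) • D (Fin.last n) = 0 := by rw [hlin, hwz, neg_zero]
    exact (smul_eq_zero.mp this).resolve_left (hm _).ne'
  intro i
  refine Fin.lastCases hDlast (fun j => ?_) i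
  by_cases hj : j = k₁
  · rw [hj]; exact hDk
  · exact hDzero j hj
end

section
/- Let n ≥ 2 and let m_1, …, m_n be positive real numbers. Define F : (ℝ²)ⁿ → (ℝ²)ⁿ by F_i(q_1, …, q_n) = q_i − Σ_{j≠i} (m_j / |q_i − q_j|³)(q_i − q_j) on configurations of pairwise distinct points. Let q = (q_1, …, q_n) be a normalized central configuration (F(q) = 0) that is non-degenerate, i.e. the derivative DF(q), a linear map on (ℝ²)ⁿ ≅ ℝ^{2n}, has rank 2n − 1. Assume moreover that q_{n-1} = (x_{n-1}, 0) with x_{n-1} ≠ 0 and x_{n-1} ≠ x_n (first coordinates). Define the reduced map G : (ℝ²)^{n-2} × ℝ → (ℝ²)^{n-2} × ℝ on variables (q_1, …, q_{n-2}, x_{n-1}) by substituting q_{n-1} = (x_{n-1}, 0) and q_n = −(1/m_n)(Σ_{i=1}^{n-2} m_i q_i + m_{n-1}(x_{n-1},0)), whose components are F_i for i = 1, …, n−2 together with the first (x) component of F_{n-1}. Then the derivative DG at (q_1, …, q_{n-2}, x_{n-1}) is invertible. -/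
open Finset

/-- The point `(a, b)` of the Euclidean plane. -/
noncomputable def pt (a b : ℝ) : E2 := (WithLp.equiv 2 (Fin 2 → ℝ)).symm ![a, b]

/-- `F_i(q) = q_i − Σ_{j≠i} (m_j / |q_i − q_j|³)(q_i − q_j)`; normalized central
configurations are the (pairwise distinct) zeros of `F`. -/
noncomputable def Fmap {ι : Type} [Fintype ι] [DecidableEq ι] (m : ι → ℝ) (q : ι → E2) :
    ι → E2 :=
  fun i => q i - ∑ j ∈ Finset.univ.filter (· ≠ i), (m j / ‖q i - q j‖ ^ 3) • (q i - q j)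

/-- The configuration of `n + 2` bodies built from the reduced variables
`(q_1, …, q_n, x_{n+1})`: body `n` (0-based) is `(x, 0)` and the last body is obtained
from the center-of-mass relation. -/
noncomputable def redConfig (n : ℕ) (m : Fin (n + 2) → ℝ) (z : (Fin n → E2) × ℝ) :
    Fin (n + 2) → E2 :=
  Fin.snoc (Fin.snoc z.1 (pt z.2 0))
    ((-(m (Fin.last (n + 1)))⁻¹) •
      (∑ i : Fin n, m i.castSucc.castSucc • z.1 i + m ((Fin.last n).castSucc) • pt z.2 0))

/-- The reduced map `G`: the components `F_i` for the first `n` bodies and the first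
(`x`) component of `F` at body `n`, evaluated on the reduced configuration. -/
noncomputable def Gmap (n : ℕ) (m : Fin (n + 2) → ℝ) (z : (Fin n → E2) × ℝ) :
    (Fin n → E2) × ℝ :=
  (fun i => Fmap m (redConfig n m z) i.castSucc.castSucc,
   Fmap m (redConfig n m z) ((Fin.last n).castSucc) 0)

/-! ### Auxiliary material -/

open scoped RealInnerProductSpace

section Plane

lemma pt_apply_zero (a b : ℝ) : pt a b 0 = a := by simp [pt]
lemma pt_apply_one (a b : ℝ) : pt a b 1 = b := by simp [pt]

lemma pt_add (a b : ℝ) : pt (a + b) 0 = pt a 0 + pt b 0 := by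
  ext i; fin_cases i <;> simp [pt_apply_zero, pt_apply_one]

lemma pt_smul (c a : ℝ) : pt (c * a) 0 = c • pt a 0 := by
  ext i; fin_cases i <;> simp [pt_apply_zero, pt_apply_one]

/-- Rotation by `π/2` as a linear map of the plane. -/
noncomputable def Jmap : E2 →ₗ[ℝ] E2 where
  toFun x := pt (-(x 1)) (x 0)
  map_add' x y := by
    ext i; fin_cases i <;> (simp [pt_apply_zero, pt_apply_one]; try ring)
  map_smul' c x := by
    ext i; fin_cases i <;> (simp [pt_apply_zero, pt_apply_one]; try ring)

lemma Jmap_apply_zero (x : E2) : Jmap x 0 = -(x 1) := by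
  simp [Jmap, pt_apply_zero]
lemma Jmap_apply_one (x : E2) : Jmap x 1 = x 0 := by
  simp [Jmap, pt_apply_one]

lemma inner_E2 (x y : E2) : ⟪x, y⟫ = x 0 * y 0 + x 1 * y 1 := by
  simp [PiLp.inner_apply, Fin.sum_univ_two]
  ring

lemma inner_J_self (x : E2) : ⟪x, Jmap x⟫ = 0 := by
  simp [inner_E2, Jmap_apply_zero, Jmap_apply_one]; ring

lemma inner_J_J (x y : E2) : ⟪Jmap x, Jmap y⟫ = ⟪x, y⟫ := by
  simp [inner_E2, Jmap_apply_zero, Jmap_apply_one]; ring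

lemma norm_J (x : E2) : ‖Jmap x‖ = ‖x‖ := by
  have h : ⟪Jmap x, Jmap x⟫ = ⟪x, x⟫ := inner_J_J x x
  rw [real_inner_self_eq_norm_sq, real_inner_self_eq_norm_sq] at h
  nlinarith [norm_nonneg (Jmap x), norm_nonneg x]

lemma Jmap_eq_zero {x : E2} (h : Jmap x = 0) : x = 0 := by
  have h0 : Jmap x 0 = (0 : E2) 0 := by rw [h]
  have h1 : Jmap x 1 = (0 : E2) 1 := by rw [h]
  rw [Jmap_apply_zero] at h0
  rw [Jmap_apply_one] at h1
  ext i
  fin_cases i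
  · simpa using h1
  · simpa using h0

end Plane

section Antisymm

variable {ι : Type} [Fintype ι] [DecidableEq ι] {M : Type*} [AddCommGroup M] [Module ℝ M]

lemma sum_antisymm_zero (f : ι → ι → M) (hf : ∀ i j, f j i = - f i j) :
    ∑ i, ∑ j ∈ Finset.univ.filter (· ≠ i), f i j = 0 := by
  have hcomm : (∑ i, ∑ j ∈ Finset.univ.filter (· ≠ i), f i j)
      = ∑ j, ∑ i ∈ Finset.univ.filter (· ≠ j), f i j := by
    rw [Finset.sum_comm' (s' := fun j => Finset.univ.filter (· ≠ j)) (t' := Finset.univ)]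
    intro i j
    simp [ne_comm, eq_comm]
  have h2 : (∑ i, ∑ j ∈ Finset.univ.filter (· ≠ i), f i j)
      = - ∑ i, ∑ j ∈ Finset.univ.filter (· ≠ i), f i j := by
    nth_rewrite 1 [hcomm]
    rw [← Finset.sum_neg_distrib]
    refine Finset.sum_congr rfl fun j _ => ?_
    rw [← Finset.sum_neg_distrib]
    exact Finset.sum_congr rfl fun i _ => hf j i
  set S := ∑ i, ∑ j ∈ Finset.univ.filter (· ≠ i), f i j with hS
  have h3 : (2 : ℝ) • S = 0 := by
    rw [two_smul]; nth_rewrite 2 [h2]; simp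
  simpa using (smul_eq_zero.mp h3).resolve_left (by norm_num)

end Antisymm

section Identities

variable {ι : Type} [Fintype ι] [DecidableEq ι]

/-- The weighted sum of the forces vanishes (global identity). -/
lemma sum_smul_Fmap (m : ι → ℝ) (q : ι → E2) :
    ∑ i, m i • Fmap m q i = ∑ i, m i • q i := by
  unfold Fmap
  have h : ∀ i : ι, m i • (q i - ∑ j ∈ Finset.univ.filter (· ≠ i),
        (m j / ‖q i - q j‖ ^ 3) • (q i - q j))
      = m i • q i - ∑ j ∈ Finset.univ.filter (· ≠ i),
        (m i * (m j / ‖q i - q j‖ ^ 3)) • (q i - q j) := by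
    intro i
    rw [smul_sub, Finset.smul_sum]
    congr 1
    exact Finset.sum_congr rfl fun j _ => smul_smul _ _ _
  simp only [h]
  rw [Finset.sum_sub_distrib]
  have h0 : ∑ i, ∑ j ∈ Finset.univ.filter (· ≠ i),
      (m i * (m j / ‖q i - q j‖ ^ 3)) • (q i - q j) = 0 := by
    apply sum_antisymm_zero
    intro i j
    rw [norm_sub_rev, ← neg_sub (q i) (q j), smul_neg,
      show m j * (m i / ‖q i - q j‖ ^ 3) = m i * (m j / ‖q i - q j‖ ^ 3) from by ring]
  rw [h0, sub_zero]

/-- The total angular "torque" vanishes (global identity). -/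
lemma sum_inner_Fmap (m : ι → ℝ) (q : ι → E2) :
    ∑ i, m i * ⟪Fmap m q i, Jmap (q i)⟫ = 0 := by
  unfold Fmap
  have h : ∀ i : ι, m i * ⟪q i - ∑ j ∈ Finset.univ.filter (· ≠ i),
        (m j / ‖q i - q j‖ ^ 3) • (q i - q j), Jmap (q i)⟫
      = - ∑ j ∈ Finset.univ.filter (· ≠ i),
          (m i * (m j / ‖q i - q j‖ ^ 3)) * ⟪q i - q j, Jmap (q i)⟫ := by
    intro i
    rw [inner_sub_left, inner_J_self, zero_sub, sum_inner, mul_neg, Finset.mul_sum]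
    congr 1
    refine Finset.sum_congr rfl fun j _ => ?_
    rw [real_inner_smul_left]; ring
  simp only [h]
  rw [Finset.sum_neg_distrib, neg_eq_zero]
  apply sum_antisymm_zero
  intro i j
  rw [norm_sub_rev]
  simp only [inner_E2, Jmap_apply_zero, Jmap_apply_one]
  have e0 : (q j - q i) 0 = q j 0 - q i 0 := rfl
  have e1 : (q j - q i) 1 = q j 1 - q i 1 := rfl
  have f0 : (q i - q j) 0 = q i 0 - q j 0 := rfl
  have f1 : (q i - q j) 1 = q i 1 - q j 1 := rfl
  rw [e0, e1, f0, f1]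
  ring

/-- Rotational equivariance of `Fmap`. -/
lemma Fmap_rot (m : ι → ℝ) (q : ι → E2) (θ : ℝ) :
    Fmap m (fun i => Real.cos θ • q i + Real.sin θ • Jmap (q i)) =
      fun i => Real.cos θ • Fmap m q i + Real.sin θ • Jmap (Fmap m q i) := by
  set R : E2 →ₗ[ℝ] E2 := Real.cos θ • LinearMap.id + Real.sin θ • Jmap with hRdef
  have hR : ∀ x : E2, R x = Real.cos θ • x + Real.sin θ • Jmap x := by
    intro x; simp [hRdef]
  have hnorm : ∀ x : E2, ‖R x‖ = ‖x‖ := by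
    intro x
    have h : ⟪R x, R x⟫ = ⟪x, x⟫ := by
      rw [hR]
      have a0 : (Real.cos θ • x + Real.sin θ • Jmap x) 0
          = Real.cos θ * x 0 - Real.sin θ * x 1 := by
        simp [Jmap_apply_zero]; ring
      have a1 : (Real.cos θ • x + Real.sin θ • Jmap x) 1
          = Real.cos θ * x 1 + Real.sin θ * x 0 := by
        simp [Jmap_apply_one]
      rw [inner_E2, inner_E2, a0, a1]
      nlinarith [Real.sin_sq_add_cos_sq θ]
    rw [real_inner_self_eq_norm_sq, real_inner_self_eq_norm_sq] at h
    nlinarith [norm_nonneg (R x), norm_nonneg x]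
  funext i
  have hcfg : (fun k => Real.cos θ • q k + Real.sin θ • Jmap (q k)) = fun k => R (q k) := by
    funext k; rw [hR]
  rw [hcfg]
  show R (q i) - ∑ j ∈ Finset.univ.filter (· ≠ i),
      (m j / ‖R (q i) - R (q j)‖ ^ 3) • (R (q i) - R (q j)) = _
  have hterm : ∀ j ∈ Finset.univ.filter (· ≠ i),
      (m j / ‖R (q i) - R (q j)‖ ^ 3) • (R (q i) - R (q j))
        = R ((m j / ‖q i - q j‖ ^ 3) • (q i - q j)) := by
    intro j _
    rw [← map_sub, hnorm, ← map_smul]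
  rw [Finset.sum_congr rfl hterm, ← map_sum, ← map_sub]
  have : q i - ∑ j ∈ Finset.univ.filter (· ≠ i),
      (m j / ‖q i - q j‖ ^ 3) • (q i - q j) = Fmap m q i := rfl
  rw [this, hR]

end Identities

section Derivatives

variable {ι : Type} [Fintype ι] [DecidableEq ι]

lemma fmap_differentiableAt (m : ι → ℝ) (q : ι → E2) (hinj : Function.Injective q) :
    DifferentiableAt ℝ (Fmap m) q := by
  rw [differentiableAt_pi]
  intro i
  have hev : ∀ k : ι, DifferentiableAt ℝ (fun q' : ι → E2 => q' k) q := by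
    intro k
    exact differentiableAt_pi.mp differentiableAt_id k
  refine (hev i).sub ?_
  refine DifferentiableAt.fun_sum fun j hj => ?_
  have hij : j ≠ i := by simpa using hj
  have hsub : DifferentiableAt ℝ (fun q' : ι → E2 => q' i - q' j) q := (hev i).sub (hev j)
  have hne : q i - q j ≠ 0 := sub_ne_zero.mpr fun h => hij (hinj h).symm
  have hnorm : DifferentiableAt ℝ (fun q' : ι → E2 => ‖q' i - q' j‖) q :=
    hsub.norm ℝ hne
  have hpow : DifferentiableAt ℝ (fun q' : ι → E2 => ‖q' i - q' j‖ ^ 3) q := hnorm.pow 3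
  have hden : (‖q i - q j‖ : ℝ) ^ 3 ≠ 0 := pow_ne_zero 3 (norm_ne_zero_iff.mpr hne)
  refine DifferentiableAt.fun_smul ?_ hsub
  have hre : (fun q' : ι → E2 => m j / ‖q' i - q' j‖ ^ 3)
      = fun q' : ι → E2 => m j * (‖q' i - q' j‖ ^ 3)⁻¹ := by
    funext q'; rw [div_eq_mul_inv]
  rw [hre]
  exact (hpow.inv hden).const_mul (m j)

lemma fmap_component_hasFDerivAt (m : ι → ℝ) (q : ι → E2) (hinj : Function.Injective q)
    (i : ι) :
    HasFDerivAt (fun q' : ι → E2 => Fmap m q' i)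
      ((ContinuousLinearMap.proj (R := ℝ) (φ := fun _ : ι => E2) i).comp
        (fderiv ℝ (Fmap m) q)) q := by
  exact (ContinuousLinearMap.proj (R := ℝ) (φ := fun _ : ι => E2) i).hasFDerivAt.comp q
    (fmap_differentiableAt m q hinj).hasFDerivAt

/-- Differentiated version of the center-of-mass identity. -/
lemma fderiv_sum_smul (m : ι → ℝ) (q : ι → E2) (hinj : Function.Injective q)
    (v : ι → E2) :
    ∑ i, m i • fderiv ℝ (Fmap m) q v i = ∑ i, m i • v i := by
  set DF := fderiv ℝ (Fmap m) q with hDF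
  have h1 : HasFDerivAt (fun q' : ι → E2 => ∑ i, m i • Fmap m q' i)
      (∑ i, m i • ((ContinuousLinearMap.proj (R := ℝ) (φ := fun _ : ι => E2) i).comp DF)) q :=
    HasFDerivAt.fun_sum fun i _ => (fmap_component_hasFDerivAt m q hinj i).const_smul (m i)
  have h2 : HasFDerivAt (fun q' : ι → E2 => ∑ i, m i • q' i)
      (∑ i, m i • (ContinuousLinearMap.proj (R := ℝ) (φ := fun _ : ι => E2) i)) q :=
    HasFDerivAt.fun_sum fun i _ =>
      (ContinuousLinearMap.proj (R := ℝ) (φ := fun _ : ι => E2) i).hasFDerivAt.const_smul (m i)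
  have heq : (fun q' : ι → E2 => ∑ i, m i • Fmap m q' i)
      = fun q' : ι → E2 => ∑ i, m i • q' i :=
    funext fun q' => sum_smul_Fmap m q'
  rw [heq] at h1
  have huniq := h1.unique h2
  have happ := DFunLike.congr_fun huniq v
  simpa [ContinuousLinearMap.sum_apply, ContinuousLinearMap.smul_apply,
    ContinuousLinearMap.comp_apply, ContinuousLinearMap.proj_apply] using happ

/-- Differentiated version of the angular-momentum identity, at a zero of `Fmap`. -/
lemma fderiv_sum_inner (m : ι → ℝ) (q : ι → E2) (hinj : Function.Injective q)
    (hF : Fmap m q = 0) (v : ι → E2) :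
    ∑ i, m i * ⟪fderiv ℝ (Fmap m) q v i, Jmap (q i)⟫ = 0 := by
  set DF := fderiv ℝ (Fmap m) q with hDF
  set Jclm : E2 →L[ℝ] E2 := LinearMap.toContinuousLinearMap Jmap with hJclm
  have hJi : ∀ i : ι, HasFDerivAt (fun q' : ι → E2 => Jmap (q' i))
      (Jclm.comp (ContinuousLinearMap.proj (R := ℝ) (φ := fun _ : ι => E2) i)) q := by
    intro i
    exact Jclm.hasFDerivAt.comp q
      (ContinuousLinearMap.proj (R := ℝ) (φ := fun _ : ι => E2) i).hasFDerivAt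
  have hterm : ∀ i : ι, HasFDerivAt
      (fun q' : ι → E2 => ⟪Fmap m q' i, Jmap (q' i)⟫)
      ((fderivInnerCLM ℝ (Fmap m q i, Jmap (q i))).comp
        (((ContinuousLinearMap.proj (R := ℝ) (φ := fun _ : ι => E2) i).comp DF).prod
          (Jclm.comp (ContinuousLinearMap.proj (R := ℝ) (φ := fun _ : ι => E2) i)))) q :=
    fun i => (fmap_component_hasFDerivAt m q hinj i).inner ℝ (hJi i)
  have h1 : HasFDerivAt (fun q' : ι → E2 => ∑ i, m i * ⟪Fmap m q' i, Jmap (q' i)⟫)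
      (∑ i, m i • ((fderivInnerCLM ℝ (Fmap m q i, Jmap (q i))).comp
        (((ContinuousLinearMap.proj (R := ℝ) (φ := fun _ : ι => E2) i).comp DF).prod
          (Jclm.comp (ContinuousLinearMap.proj (R := ℝ) (φ := fun _ : ι => E2) i))))) q := by
    refine HasFDerivAt.fun_sum fun i _ => ?_
    simpa [smul_eq_mul] using (hterm i).fun_const_smul (m i)
  have heq : (fun q' : ι → E2 => ∑ i, m i * ⟪Fmap m q' i, Jmap (q' i)⟫)
      = fun _ : ι → E2 => (0 : ℝ) :=
    funext fun q' => sum_inner_Fmap m q'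
  rw [heq] at h1
  have huniq := h1.unique (hasFDerivAt_const 0 q)
  have happ := DFunLike.congr_fun huniq v
  have hFz : ∀ i : ι, Fmap m q i = 0 := fun i => congrFun hF i
  simp only [ContinuousLinearMap.sum_apply, ContinuousLinearMap.smul_apply,
    ContinuousLinearMap.comp_apply, ContinuousLinearMap.prod_apply,
    ContinuousLinearMap.proj_apply, fderivInnerCLM_apply, ContinuousLinearMap.zero_apply,
    smul_eq_mul] at happ
  simp only [hFz, inner_zero_left, zero_add] at happ
  simpa [hJclm] using happ

/-- The rotation field is in the kernel of the derivative of `Fmap` at a zero. -/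
lemma fderiv_rot (m : ι → ℝ) (q : ι → E2) (hinj : Function.Injective q)
    (hF : Fmap m q = 0) :
    fderiv ℝ (Fmap m) q (fun i => Jmap (q i)) = 0 := by
  classical
  set Jqv : ι → E2 := fun i => Jmap (q i) with hJqv
  set γ : ℝ → (ι → E2) := fun θ => Real.cos θ • q + Real.sin θ • Jqv with hγ
  have hγ0 : γ 0 = q := by
    funext i; simp [hγ]
  have hγd : HasDerivAt γ Jqv 0 := by
    have h1 : HasDerivAt (fun θ : ℝ => Real.cos θ • q) ((-Real.sin 0) • q) 0 :=
      (Real.hasDerivAt_cos 0).smul_const q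
    have h2 : HasDerivAt (fun θ : ℝ => Real.sin θ • Jqv) ((Real.cos 0) • Jqv) 0 :=
      (Real.hasDerivAt_sin 0).smul_const Jqv
    simpa [hγ] using h1.fun_add h2
  have hd : HasFDerivAt (Fmap m) (fderiv ℝ (Fmap m) q) (γ 0) := by
    rw [hγ0]; exact (fmap_differentiableAt m q hinj).hasFDerivAt
  have hchain : HasDerivAt (fun θ => Fmap m (γ θ)) (fderiv ℝ (Fmap m) q Jqv) 0 :=
    HasFDerivAt.comp_hasDerivAt (f := γ) (x := (0 : ℝ)) hd hγd
  have hconst : (fun θ => Fmap m (γ θ)) = fun _ => (0 : ι → E2) := by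
    funext θ
    have : γ θ = fun i => Real.cos θ • q i + Real.sin θ • Jmap (q i) := by
      funext i; simp [hγ, hJqv]
    rw [this, Fmap_rot m q θ]
    funext i
    rw [congrFun hF i]
    simp
  rw [hconst] at hchain
  exact hchain.unique (hasDerivAt_const 0 0)

end Derivatives

section Reduced

variable (n : ℕ) (m : Fin (n + 2) → ℝ)

/-- `redConfig` as a linear map. -/
noncomputable def Lmap : ((Fin n → E2) × ℝ) →ₗ[ℝ] (Fin (n + 2) → E2) where
  toFun := redConfig n m
  map_add' z w := by
    funext i
    refine Fin.lastCases ?_ (fun j => ?_) i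
    · simp only [redConfig, Fin.snoc_last, Pi.add_apply, Prod.fst_add, Prod.snd_add,
        pt_add, Pi.add_apply]
      rw [← smul_add]
      congr 1
      have hsum : ∑ x : Fin n, m x.castSucc.castSucc • (z.1 x + w.1 x)
          = ∑ x : Fin n, m x.castSucc.castSucc • z.1 x
            + ∑ x : Fin n, m x.castSucc.castSucc • w.1 x := by
        rw [← Finset.sum_add_distrib]
        exact Finset.sum_congr rfl fun k _ => smul_add _ _ _
      rw [hsum, smul_add]
      abel
    · refine Fin.lastCases ?_ (fun k => ?_) j
      · simp only [redConfig, Fin.snoc_castSucc, Fin.snoc_last, Pi.add_apply,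
          Prod.snd_add, pt_add]
      · simp only [redConfig, Fin.snoc_castSucc, Pi.add_apply, Prod.fst_add]
  map_smul' c z := by
    have h2 : pt (c • z).2 0 = c • pt z.2 0 := by
      rw [Prod.smul_snd, smul_eq_mul, pt_smul]
    funext i
    refine Fin.lastCases ?_ (fun j => ?_) i
    · simp only [redConfig, Fin.snoc_last, Pi.smul_apply, RingHom.id_apply]
      have h1 : ∀ k : Fin n, m k.castSucc.castSucc • (c • z).1 k
          = c • (m k.castSucc.castSucc • z.1 k) := by
        intro k
        rw [Prod.smul_fst, Pi.smul_apply, smul_comm]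
      rw [Finset.sum_congr rfl fun k _ => h1 k, h2, smul_comm (m ((Fin.last n).castSucc)) c,
        ← Finset.smul_sum, ← smul_add, smul_comm (-(m (Fin.last (n + 1)))⁻¹) c]
    · refine Fin.lastCases ?_ (fun k => ?_) j
      · simp only [redConfig, Fin.snoc_castSucc, Fin.snoc_last, Pi.smul_apply,
          RingHom.id_apply]
        exact h2
      · simp only [redConfig, Fin.snoc_castSucc, Pi.smul_apply, RingHom.id_apply]
        rw [Prod.smul_fst, Pi.smul_apply]

lemma Lmap_castSucc (z : (Fin n → E2) × ℝ) (k : Fin n) :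
    Lmap n m z k.castSucc.castSucc = z.1 k := by
  simp [Lmap, redConfig, Fin.snoc_castSucc]

lemma Lmap_nn (z : (Fin n → E2) × ℝ) :
    Lmap n m z ((Fin.last n).castSucc) = pt z.2 0 := by
  simp [Lmap, redConfig]

lemma Lmap_last (z : (Fin n → E2) × ℝ) :
    Lmap n m z (Fin.last (n + 1)) = (-(m (Fin.last (n + 1)))⁻¹) •
      (∑ i : Fin n, m i.castSucc.castSucc • z.1 i + m ((Fin.last n).castSucc) • pt z.2 0) := by
  simp [Lmap, redConfig]

/-- The projection onto the reduced coordinates, as a linear map. -/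
noncomputable def Pmap : (Fin (n + 2) → E2) →ₗ[ℝ] ((Fin n → E2) × ℝ) where
  toFun v := (fun i => v i.castSucc.castSucc, v ((Fin.last n).castSucc) 0)
  map_add' v w := rfl
  map_smul' c v := rfl

noncomputable def Lclm : ((Fin n → E2) × ℝ) →L[ℝ] (Fin (n + 2) → E2) :=
  LinearMap.toContinuousLinearMap (Lmap n m)

noncomputable def Pclm : (Fin (n + 2) → E2) →L[ℝ] ((Fin n → E2) × ℝ) :=
  LinearMap.toContinuousLinearMap (Pmap n)

lemma Gmap_eq : Gmap n m = fun z => Pclm n (Fmap m (Lclm n m z)) := by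
  funext z
  simp only [Gmap, Pclm, Lclm, LinearMap.coe_toContinuousLinearMap', Pmap, Lmap,
    LinearMap.coe_mk, AddHom.coe_mk]
  rfl

end Reduced

/-- a non-degenerate normalized central configuration of `n + 2` bodies with
`q_{n}` on the positive or negative `x`-axis (second coordinate `0`, first coordinate
nonzero and different from the first coordinate of the last body) gives a point at which
the derivative of the reduced map `G` is invertible. -/
theorem stmt3 (n : ℕ) (m : Fin (n + 2) → ℝ) (hm : ∀ i, 0 < m i)
    (q : Fin (n + 2) → E2) (hinj : Function.Injective q)
    (hF : Fmap m q = 0)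
    (hrank : Module.finrank ℝ (LinearMap.range ((fderiv ℝ (Fmap m) q : (Fin (n + 2) → E2) →L[ℝ] Fin (n + 2) → E2) :
      (Fin (n + 2) → E2) →ₗ[ℝ] Fin (n + 2) → E2)) = 2 * (n + 2) - 1)
    (hy : q ((Fin.last n).castSucc) 1 = 0)
    (hx0 : q ((Fin.last n).castSucc) 0 ≠ 0)
    (hxn : q ((Fin.last n).castSucc) 0 ≠ q (Fin.last (n + 1)) 0) :
    Function.Bijective
      (fderiv ℝ (Gmap n m) (fun i => q i.castSucc.castSucc, q ((Fin.last n).castSucc) 0)) := by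
  classical
  set nn : Fin (n + 2) := (Fin.last n).castSucc with hnn
  set ll : Fin (n + 2) := Fin.last (n + 1) with hll
  set z₀ : (Fin n → E2) × ℝ := (fun i => q i.castSucc.castSucc, q nn 0) with hz₀
  have hmll : m ll ≠ 0 := (hm ll).ne'
  have hmnn : m nn ≠ 0 := (hm nn).ne'
  set DF := fderiv ℝ (Fmap m) q with hDFdef
  set Jqv : Fin (n + 2) → E2 := fun i => Jmap (q i) with hJqv
  -- center of mass is zero
  have hcom : ∑ i, m i • q i = 0 := by
    rw [← sum_smul_Fmap m q, hF]
    simp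
  have hptnn : pt (q nn 0) 0 = q nn := by
    ext i
    fin_cases i
    · exact pt_apply_zero _ _
    · exact (pt_apply_one _ _).trans hy.symm
  have hsplit : ∀ {M : Type} [AddCommMonoid M], ∀ f : Fin (n + 2) → M,
      ∑ i, f i = (∑ k : Fin n, f k.castSucc.castSucc) + f nn + f ll := by
    intro M _ f
    rw [Fin.sum_univ_castSucc (f := f),
      Fin.sum_univ_castSucc (f := fun i : Fin (n + 1) => f i.castSucc)]
  have hL0 : (Lclm n m) z₀ = q := by
    have hLL : (Lclm n m) z₀ = (Lmap n m) z₀ := rfl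
    rw [hLL]
    funext i
    refine Fin.lastCases ?_ (fun j => ?_) i
    · rw [Lmap_last]
      have hs := hsplit (fun i => m i • q i)
      rw [hcom] at hs
      have hS : ∑ k : Fin n, m k.castSucc.castSucc • z₀.1 k + m nn • pt z₀.2 0
          = -(m ll • q ll) := by
        have hz2 : (z₀.2 : ℝ) = q nn 0 := rfl
        rw [hz2, hptnn]
        have : (∑ k : Fin n, m k.castSucc.castSucc • q k.castSucc.castSucc) + m nn • q nn
            = -(m ll • q ll) := by
          have := hs.symm
          rw [← add_eq_zero_iff_eq_neg]
          abel_nf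
          abel_nf at this
          exact this
        exact this
      rw [hS, smul_neg, neg_smul, neg_neg, smul_smul, inv_mul_cancel₀ hmll, one_smul]
    · refine Fin.lastCases ?_ (fun k => ?_) j
      · rw [show (Fin.last n).castSucc = nn from rfl, Lmap_nn]
        exact hptnn
      · rw [Lmap_castSucc]
  -- chain rule
  have hdF : HasFDerivAt (Fmap m) DF ((Lclm n m) z₀) := by
    rw [hL0]; exact (fmap_differentiableAt m q hinj).hasFDerivAt
  set T : ((Fin n → E2) × ℝ) →L[ℝ] ((Fin n → E2) × ℝ) :=
    (Pclm n).comp (DF.comp (Lclm n m)) with hT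
  have hco : HasFDerivAt (fun z => (Pclm n) (Fmap m ((Lclm n m) z))) T z₀ :=
    (Pclm n).hasFDerivAt.comp z₀ (hdF.comp z₀ (Lclm n m).hasFDerivAt)
  have hG : HasFDerivAt (Gmap n m) T z₀ := by
    rw [Gmap_eq n m]; exact hco
  rw [hG.fderiv]
  -- the kernel of DF is spanned by the rotation field
  have hJker : DF Jqv = 0 := fderiv_rot m q hinj hF
  have hdim : Module.finrank ℝ (Fin (n + 2) → E2) = 2 * (n + 2) := by
    rw [Module.finrank_pi_fintype]
    simp [finrank_euclideanSpace_fin]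
    ring
  have hker1 : Module.finrank ℝ (LinearMap.ker (DF : (Fin (n + 2) → E2) →ₗ[ℝ] (Fin (n + 2) → E2))) = 1 := by
    have h := LinearMap.finrank_range_add_finrank_ker
      (DF : (Fin (n + 2) → E2) →ₗ[ℝ] (Fin (n + 2) → E2))
    rw [hdim] at h
    have hrange : Module.finrank ℝ (LinearMap.range
        (DF : (Fin (n + 2) → E2) →ₗ[ℝ] (Fin (n + 2) → E2))) = 2 * (n + 2) - 1 := hrank
    rw [hrange] at h
    have hkeq : LinearMap.ker (DF : (Fin (n + 2) → E2) →ₗ[ℝ] (Fin (n + 2) → E2))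
        = LinearMap.ker (DF : (Fin (n + 2) → E2) →ₗ[ℝ] (Fin (n + 2) → E2)) := rfl
    rw [hkeq] at h
    omega
  have hJne : Jqv ≠ 0 := by
    have hqi : ∃ i : Fin (n + 2), q i ≠ 0 := by
      by_cases h0 : q 0 = 0
      · refine ⟨1, fun h1 => ?_⟩
        have : (0 : Fin (n + 2)) = 1 := hinj (by rw [h0, h1])
        simp at this
      · exact ⟨0, h0⟩
    obtain ⟨i, hi⟩ := hqi
    intro hcon
    exact hi (Jmap_eq_zero (congrFun hcon i))
  have hspan : LinearMap.ker (DF : (Fin (n + 2) → E2) →ₗ[ℝ] (Fin (n + 2) → E2)) = Submodule.span ℝ {Jqv} := by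
    symm
    apply Submodule.eq_of_le_of_finrank_le
    · rw [Submodule.span_le, Set.singleton_subset_iff]
      exact LinearMap.mem_ker.mpr hJker
    · rw [hker1, finrank_span_singleton hJne]
  have hkernel : ∀ u : Fin (n + 2) → E2, DF u = 0 → ∃ t : ℝ, t • Jqv = u := by
    intro u hu
    have : u ∈ LinearMap.ker (DF : (Fin (n + 2) → E2) →ₗ[ℝ] (Fin (n + 2) → E2)) := LinearMap.mem_ker.mpr hu
    rw [hspan] at this
    exact Submodule.mem_span_singleton.mp this
  -- injectivity
  have hkey : ∀ w : (Fin n → E2) × ℝ, T w = 0 → w = 0 := by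
    intro w hw
    set v : Fin (n + 2) → E2 := (Lclm n m) w with hv
    have hveq : v = (Lmap n m) w := rfl
    have hv1 : ∀ k : Fin n, v k.castSucc.castSucc = w.1 k := by
      intro k; rw [hveq, Lmap_castSucc]
    have hvnn : v nn = pt w.2 0 := by rw [hveq]; exact Lmap_nn n m w
    have hvll : v ll = (-(m ll)⁻¹) •
        (∑ k : Fin n, m k.castSucc.castSucc • w.1 k + m nn • pt w.2 0) := by
      rw [hveq]; exact Lmap_last n m w
    have hPw : (Pmap n) (DF v) = 0 := hw
    have h1 : ∀ k : Fin n, DF v k.castSucc.castSucc = 0 := by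
      intro k
      have := congrFun (congrArg Prod.fst hPw) k
      exact this
    have h2 : DF v nn 0 = 0 := by
      have := congrArg Prod.snd hPw
      exact this
    have hwsum : ∑ i, m i • v i = 0 := by
      rw [hsplit (fun i => m i • v i)]
      have e1 : ∑ k : Fin n, m k.castSucc.castSucc • v k.castSucc.castSucc
          = ∑ k : Fin n, m k.castSucc.castSucc • w.1 k :=
        Finset.sum_congr rfl fun k _ => by rw [hv1]
      rw [e1, hvnn, hvll, smul_smul, mul_neg, mul_inv_cancel₀ hmll, neg_smul, one_smul]
      abel
    have hDsum : ∑ i, m i • DF v i = 0 := by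
      rw [fderiv_sum_smul m q hinj v, hwsum]
    have hDll : m nn • DF v nn + m ll • DF v ll = 0 := by
      have hs := hsplit (fun i => m i • DF v i)
      rw [hDsum] at hs
      have e1 : ∑ k : Fin n, m k.castSucc.castSucc • DF v k.castSucc.castSucc = 0 :=
        Finset.sum_eq_zero fun k _ => by rw [h1 k, smul_zero]
      rw [e1, zero_add] at hs
      rw [← hs]
    have hll_eq : DF v ll = (-((m ll)⁻¹ * m nn)) • DF v nn := by
      have h := congrArg (fun x : E2 => (m ll)⁻¹ • x) hDll
      simp only [smul_add, smul_smul, smul_zero] at h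
      rw [inv_mul_cancel₀ hmll, one_smul] at h
      have := eq_neg_of_add_eq_zero_right h
      rw [this, neg_smul]
    have hang : m nn * ⟪DF v nn, Jmap (q nn)⟫ + m ll * ⟪DF v ll, Jmap (q ll)⟫ = 0 := by
      have h := fderiv_sum_inner m q hinj hF v
      rw [hsplit (fun i => m i * ⟪DF v i, Jmap (q i)⟫)] at h
      have e1 : ∑ k : Fin n,
          m k.castSucc.castSucc * ⟪DF v k.castSucc.castSucc, Jmap (q k.castSucc.castSucc)⟫ = 0 :=
        Finset.sum_eq_zero fun k _ => by rw [h1 k, inner_zero_left, mul_zero]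
      rw [e1, zero_add] at h
      exact h
    set β : ℝ := DF v nn 1 with hβ
    have hll0 : DF v ll 0 = 0 := by
      rw [hll_eq]
      have : ((-((m ll)⁻¹ * m nn)) • DF v nn) 0 = (-((m ll)⁻¹ * m nn)) * DF v nn 0 := rfl
      rw [this, h2, mul_zero]
    have hll1 : DF v ll 1 = -((m ll)⁻¹ * m nn) * β := by
      rw [hll_eq]; rfl
    have hinn1 : ⟪DF v nn, Jmap (q nn)⟫ = β * q nn 0 := by
      rw [inner_E2, Jmap_apply_zero, Jmap_apply_one, h2]; ring
    have hinn2 : ⟪DF v ll, Jmap (q ll)⟫ = -((m ll)⁻¹ * m nn) * β * q ll 0 := by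
      rw [inner_E2, Jmap_apply_zero, Jmap_apply_one, hll0, hll1]; ring
    have hβ0 : β = 0 := by
      rw [hinn1, hinn2] at hang
      have hcancel : m ll * (-((m ll)⁻¹ * m nn) * β * q ll 0) = -(m nn * β * q ll 0) := by
        field_simp
      rw [hcancel] at hang
      have hang' : m nn * β * (q nn 0 - q ll 0) = 0 := by linear_combination hang
      have hsub : q nn 0 - q ll 0 ≠ 0 := sub_ne_zero.mpr hxn
      rcases mul_eq_zero.mp hang' with h | h
      · rcases mul_eq_zero.mp h with h' | h'
        · exact absurd h' hmnn
        · exact h'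
      · exact absurd h hsub
    have hDFnn : DF v nn = 0 := by
      ext j
      fin_cases j
      · exact h2
      · exact hβ0
    have hDFll : DF v ll = 0 := by
      rw [hll_eq, hDFnn, smul_zero]
    have hDFv : DF v = 0 := by
      funext i
      refine Fin.lastCases ?_ (fun j => ?_) i
      · exact hDFll
      · refine Fin.lastCases ?_ (fun k => ?_) j
        · exact hDFnn
        · exact h1 k
    obtain ⟨t, ht⟩ := hkernel v hDFv
    have ht0 : t = 0 := by
      have hc := congrFun ht nn
      have hc1 := congrArg (fun x : E2 => x 1) hc
      have hL : ((t • Jqv) nn) 1 = t * q nn 0 := by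
        have : ((t • Jqv) nn) 1 = t * (Jmap (q nn) 1) := rfl
        rw [this, Jmap_apply_one]
      have hRr : (v nn) 1 = 0 := by rw [hvnn, pt_apply_one]
      simp only at hc1
      rw [hL, hRr] at hc1
      exact (mul_eq_zero.mp hc1).resolve_right hx0
    have hv0 : v = 0 := by rw [← ht, ht0, zero_smul]
    have hw1 : w.1 = 0 := by
      funext k
      rw [← hv1 k, hv0]
      rfl
    have hw2 : w.2 = 0 := by
      have hp : pt w.2 0 = 0 := by rw [← hvnn, hv0]; rfl
      have := congrArg (fun x : E2 => x 0) hp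
      simpa [pt_apply_zero] using this
    have : w = (w.1, w.2) := rfl
    rw [this, hw1, hw2]
    rfl
  have hTinj : Function.Injective T := by
    intro a b hab
    have h0 : T (a - b) = 0 := by rw [map_sub, hab, sub_self]
    have := hkey _ h0
    exact sub_eq_zero.mp this
  refine ⟨hTinj, ?_⟩
  exact (LinearMap.injective_iff_surjective
    (f := (T : ((Fin n → E2) × ℝ) →ₗ[ℝ] ((Fin n → E2) × ℝ)))).mp hTinj
end

section
/- Let q = (q_1, …, q_n) be a normalized central configuration of n bodies in the plane with positive masses m_1, …, m_n, and let M = Σ_i m_i. Then: (i) if n ≥ 2, max_i |q_i| ≤ M^{1/3} (n − 1); and (ii) if n ≥ 4, max_i |q_i| ≤ M^{1/3} (2^{1/3} + 2^{−2/3}) (n − 2)^{2/3}. -/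
set_option maxHeartbeats 1000000

open Finset

/-- The equations for a normalized central configuration:
`q_i = Σ_{j≠i} (m_j / |q_i − q_j|³)(q_i − q_j)` for every `i`. -/
def CCeqs {ι : Type} [Fintype ι] [DecidableEq ι] (m : ι → ℝ) (q : ι → E2) : Prop :=
  ∀ i, q i = ∑ j ∈ Finset.univ.filter (· ≠ i), (m j / ‖q i - q j‖ ^ 3) • (q i - q j)

open RealInnerProductSpace

private lemma le_cbrt {x M : ℝ} (hx : 0 ≤ x) (h3 : x ^ 3 ≤ M) : x ≤ M ^ ((1:ℝ)/3) := by
  calc x = (x^(3:ℕ))^((1:ℝ)/3) := by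
        rw [← Real.rpow_natCast x 3, ← Real.rpow_mul hx]; norm_num
    _ ≤ M^((1:ℝ)/3) := Real.rpow_le_rpow (by positivity) h3 (by norm_num)

private lemma le_of_sq_le_sq' {a b : ℝ} (hb : 0 ≤ b) (h : a^2 ≤ b^2) : a ≤ b := by
  nlinarith [sq_nonneg (a - b), sq_nonneg (a + b)]

private lemma sum_antisym_zero {n : ℕ} (F : Fin n → Fin n → ℝ)
    (hF : ∀ a b, F a b = -F b a) (S : Finset (Fin n)) :
    ∑ j ∈ S, ∑ l ∈ S, F j l = 0 := by
  have hTT : ∑ j ∈ S, ∑ l ∈ S, (F j l + F l j) = 0 := by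
    apply Finset.sum_eq_zero; intro j _
    apply Finset.sum_eq_zero; intro l _
    rw [hF j l]; ring
  have hsplit : ∑ j ∈ S, ∑ l ∈ S, (F j l + F l j)
      = (∑ j ∈ S, ∑ l ∈ S, F j l) + ∑ j ∈ S, ∑ l ∈ S, F l j := by
    simp [Finset.sum_add_distrib]
  have hcomm : ∑ j ∈ S, ∑ l ∈ S, F l j = ∑ j ∈ S, ∑ l ∈ S, F j l := Finset.sum_comm
  linarith

section CC

variable {n : ℕ} (m : Fin n → ℝ) (q : Fin n → E2) (u : E2)

private lemma single_identity (hcc : CCeqs m q) (j : Fin n) :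
    ⟪q j, u⟫ = ∑ l ∈ univ, (m l / ‖q j - q l‖ ^ 3) * (⟪q j, u⟫ - ⟪q l, u⟫) := by
  have h := congrArg (fun x : E2 => (inner ℝ x u : ℝ)) (hcc j)
  simp only [sum_inner, real_inner_smul_left, inner_sub_left] at h
  rw [Finset.filter_ne'] at h
  refine h.trans ?_
  exact Finset.sum_erase (f := fun l => (m l / ‖q j - q l‖ ^ 3) * (⟪q j, u⟫ - ⟪q l, u⟫))
    univ (by simp)

private lemma cut_identity (hcc : CCeqs m q) (S : Finset (Fin n)) :
    ∑ j ∈ S, m j * ⟪q j, u⟫ =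
      ∑ j ∈ S, ∑ l ∈ univ \ S, (m j * m l / ‖q j - q l‖ ^ 3) * (⟪q j, u⟫ - ⟪q l, u⟫) := by
  set F : Fin n → Fin n → ℝ :=
    fun j l => (m j * m l / ‖q j - q l‖ ^ 3) * (⟪q j, u⟫ - ⟪q l, u⟫) with hFdef
  have hF : ∀ a b, F a b = -F b a := by
    intro a b
    simp only [hFdef]
    rw [norm_sub_rev]
    ring
  have hw : ∀ j, m j * ⟪q j, u⟫ = ∑ l ∈ univ, F j l := by
    intro j
    rw [single_identity m q u hcc j, Finset.mul_sum]
    exact Finset.sum_congr rfl (fun l _ => by simp only [hFdef]; ring)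
  calc ∑ j ∈ S, m j * ⟪q j, u⟫ = ∑ j ∈ S, ∑ l ∈ univ, F j l :=
        Finset.sum_congr rfl (fun j _ => hw j)
    _ = ∑ j ∈ S, (∑ l ∈ univ \ S, F j l + ∑ l ∈ S, F j l) :=
        Finset.sum_congr rfl (fun j _ => (Finset.sum_sdiff (Finset.subset_univ S)).symm)
    _ = (∑ j ∈ S, ∑ l ∈ univ \ S, F j l) + ∑ j ∈ S, ∑ l ∈ S, F j l := Finset.sum_add_distrib
    _ = ∑ j ∈ S, ∑ l ∈ univ \ S, F j l := by
        rw [sum_antisym_zero F hF S, add_zero]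

private lemma total_zero (hcc : CCeqs m q) :
    ∑ j ∈ univ, m j * ⟪q j, u⟫ = 0 := by
  have h := cut_identity m q u hcc univ
  simpa using h

private lemma cut_bounds (hm : ∀ i, 0 < m i) (hinj : Function.Injective q)
    (hcc : CCeqs m q) (hu : ‖u‖ = 1) (c₁ c₂ : ℝ)
    (hab : ∃ j, c₁ ≤ ⟪q j, u⟫) (hbe : ∃ j, ⟪q j, u⟫ ≤ c₂) (hlt : c₂ < c₁)
    (hdich : ∀ j, ⟪q j, u⟫ ≤ c₂ ∨ c₁ ≤ ⟪q j, u⟫) :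
    (c₁ - c₂)^3 ≤ (∑ i, m i) ∧ (c₁ - c₂)^2 * c₁ ≤ (∑ i, m i) := by
  classical
  have hid := cut_identity m q u hcc
  have htot := total_zero m q u hcc
  set p : Fin n → ℝ := fun j => ⟪q j, u⟫ with hp
  set G : ℝ := c₁ - c₂ with hG
  have hGpos : 0 < G := by simp [hG]; linarith
  set S : Finset (Fin n) := univ.filter (fun j => c₁ ≤ p j) with hSdef
  set T : Finset (Fin n) := univ \ S with hTdef
  have hmemS : ∀ j ∈ S, c₁ ≤ p j := by intro j hj; exact (Finset.mem_filter.mp hj).2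
  have hmemT : ∀ l ∈ T, p l ≤ c₂ := by
    intro l hl
    have : ¬ (c₁ ≤ p l) := by
      intro hcon
      have := (Finset.mem_sdiff.mp hl).2
      exact this (Finset.mem_filter.mpr ⟨Finset.mem_univ l, hcon⟩)
    rcases hdich l with h | h
    · exact h
    · exact absurd h this
  have hSne : S.Nonempty := by
    obtain ⟨j, hj⟩ := hab
    exact ⟨j, Finset.mem_filter.mpr ⟨Finset.mem_univ j, hj⟩⟩
  have hTne : T.Nonempty := by
    obtain ⟨l, hl⟩ := hbe
    refine ⟨l, Finset.mem_sdiff.mpr ⟨Finset.mem_univ l, ?_⟩⟩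
    intro hcon
    have := (Finset.mem_filter.mp hcon).2
    linarith
  set A : ℝ := ∑ j ∈ S, m j with hAdef
  set B : ℝ := ∑ l ∈ T, m l with hBdef
  have hA : 0 < A := Finset.sum_pos (fun i _ => hm i) hSne
  have hB : 0 < B := Finset.sum_pos (fun i _ => hm i) hTne
  have hABM : A + B = ∑ i, m i := by
    have := Finset.sum_sdiff (f := m) (Finset.subset_univ S)
    rw [← hBdef, ← hAdef] at this
    linarith [this]
  -- termwise bound
  have hterm : ∀ j ∈ S, ∀ l ∈ T,
      (m j * m l / ‖q j - q l‖ ^ 3) * (p j - p l) ≤ m j * m l / G^2 := by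
    intro j hj l hl
    have hpj := hmemS j hj
    have hpl := hmemT l hl
    have hd : G ≤ p j - p l := by simp only [hG]; linarith
    have hdpos : 0 < p j - p l := lt_of_lt_of_le hGpos hd
    have hne : q j ≠ q l := by
      intro hcon
      have : j = l := hinj hcon
      subst this
      linarith
    have hnorm : p j - p l ≤ ‖q j - q l‖ := by
      have h1 : p j - p l = ⟪q j - q l, u⟫ := by simp [hp, inner_sub_left]
      have h2 : ⟪q j - q l, u⟫ ≤ |⟪q j - q l, u⟫| := le_abs_self _
      have h3 : |⟪q j - q l, u⟫| ≤ ‖q j - q l‖ * ‖u‖ := abs_real_inner_le_norm _ _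
      rw [hu, mul_one] at h3
      linarith
    have hml : 0 ≤ m j * m l := (mul_pos (hm j) (hm l)).le
    have step1 : (m j * m l / ‖q j - q l‖ ^ 3) * (p j - p l)
        ≤ (m j * m l / (p j - p l) ^ 3) * (p j - p l) := by
      gcongr
    have step2 : (m j * m l / (p j - p l) ^ 3) * (p j - p l) = m j * m l / (p j - p l)^2 := by
      field_simp
    have step3 : m j * m l / (p j - p l)^2 ≤ m j * m l / G^2 := by
      gcongr
    linarith [step1, step2 ▸ step1, step3]
  -- sum bound
  have hsum_up : ∑ j ∈ S, m j * p j ≤ A * (B / G^2) := by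
    have h1 := hid S
    rw [h1]
    have h2 : ∑ j ∈ S, ∑ l ∈ T, (m j * m l / ‖q j - q l‖ ^ 3) * (p j - p l)
        ≤ ∑ j ∈ S, ∑ l ∈ T, m j * m l / G^2 := by
      apply Finset.sum_le_sum
      intro j hj
      apply Finset.sum_le_sum
      intro l hl
      exact hterm j hj l hl
    have h3 : ∑ j ∈ S, ∑ l ∈ T, m j * m l / G^2 = A * (B / G^2) := by
      have hin : ∀ j, ∑ l ∈ T, m j * m l / G^2 = m j * (B / G^2) := by
        intro j
        rw [← Finset.sum_div, ← Finset.mul_sum, mul_div_assoc]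
      rw [Finset.sum_congr rfl (fun j _ => hin j), ← Finset.sum_mul]
    calc ∑ j ∈ S, ∑ l ∈ T, (m j * m l / ‖q j - q l‖ ^ 3) * (p j - p l)
        ≤ ∑ j ∈ S, ∑ l ∈ T, m j * m l / G^2 := h2
      _ = A * (B / G^2) := h3
  -- lower bounds
  have hlow1 : A * c₁ ≤ ∑ j ∈ S, m j * p j := by
    have : ∑ j ∈ S, m j * c₁ ≤ ∑ j ∈ S, m j * p j :=
      Finset.sum_le_sum (fun j hj => mul_le_mul_of_nonneg_left (hmemS j hj) (hm j).le)
    rw [← Finset.sum_mul] at this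
    exact this
  have hup2 : ∑ l ∈ T, m l * p l ≤ B * c₂ := by
    have : ∑ l ∈ T, m l * p l ≤ ∑ l ∈ T, m l * c₂ :=
      Finset.sum_le_sum (fun l hl => mul_le_mul_of_nonneg_left (hmemT l hl) (hm l).le)
    rw [← Finset.sum_mul] at this
    exact this
  have hsplit : (∑ l ∈ T, m l * p l) + ∑ j ∈ S, m j * p j = 0 := by
    have := Finset.sum_sdiff (f := fun j => m j * p j) (Finset.subset_univ S)
    rw [← hTdef] at this
    rw [this]
    exact htot
  have hSeq : ∑ j ∈ S, m j * p j = -∑ l ∈ T, m l * p l := by linarith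
  have hG2 : (0:ℝ) < G^2 := by positivity
  have e1 : A * B * G ≤ (A + B) * ∑ j ∈ S, m j * p j := by
    have p1 : A * (∑ l ∈ T, m l * p l) ≤ A * (B * c₂) := mul_le_mul_of_nonneg_left hup2 hA.le
    have p2 : B * (A * c₁) ≤ B * (∑ j ∈ S, m j * p j) := mul_le_mul_of_nonneg_left hlow1 hB.le
    have hrw : (A + B) * ∑ j ∈ S, m j * p j
        = B * (∑ j ∈ S, m j * p j) + A * (-∑ l ∈ T, m l * p l) := by
      rw [← hSeq]; ring
    rw [hrw, hG]
    nlinarith [p1, p2]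
  have e2 : A * B * G ≤ (A + B) * (A * (B / G^2)) :=
    le_trans e1 (mul_le_mul_of_nonneg_left hsum_up (by positivity))
  have e3 : A * B * G * G^2 ≤ (A + B) * (A * B) := by
    have h4 := mul_le_mul_of_nonneg_right e2 hG2.le
    have h5 : (A + B) * (A * (B / G^2)) * G^2 = (A + B) * (A * B) := by
      field_simp
    linarith [h4, h5 ▸ h4]
  constructor
  · rw [← hABM]
    nlinarith [mul_pos hA hB, e3]
  · rw [← hABM]
    have h6 : A * c₁ ≤ A * (B / G^2) := le_trans hlow1 hsum_up
    have h7 : c₁ ≤ B / G^2 := le_of_mul_le_mul_left h6 hA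
    have h8 : c₁ * G^2 ≤ (B / G^2) * G^2 := mul_le_mul_of_nonneg_right h7 hG2.le
    have h9 : (B / G^2) * G^2 = B := by field_simp
    nlinarith [h8, h9 ▸ h8, hA]

end CC

private lemma oneD {n : ℕ} (hn : 2 ≤ n) (M : ℝ) (hM : 0 < M) (p : Fin n → ℝ)
    (hmin : ∃ j, p j ≤ 0)
    (hkey : ∀ c₁ c₂ : ℝ, (∃ j, c₁ ≤ p j) → (∃ j, p j ≤ c₂) → c₂ < c₁ →
      (∀ j, p j ≤ c₂ ∨ c₁ ≤ p j) → (c₁ - c₂)^3 ≤ M ∧ (c₁ - c₂)^2 * c₁ ≤ M)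
    (i : Fin n) :
    p i ≤ M ^ ((1:ℝ)/3) * ((n:ℝ) - 1) ∧
    (4 ≤ n → p i ≤ 3 * (M * ((n:ℝ)-2)^2 / 4) ^ ((1:ℝ)/3)) := by
  classical
  set V : Finset ℝ := image p univ with hVdef
  have hVne : V.Nonempty := ⟨p i, Finset.mem_image_of_mem p (Finset.mem_univ i)⟩
  set s := V.card with hsdef
  have hs1 : 1 ≤ s := Finset.card_pos.mpr hVne
  have hsn : s ≤ n := by
    calc s ≤ (univ : Finset (Fin n)).card := Finset.card_image_le
      _ = n := by simp
  have e : Fin s ≃o {x // x ∈ V} := V.orderIsoOfFin hsdef.symm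
  set v : ℕ → ℝ := fun t => ((e ⟨min t (s-1), by omega⟩ : {x // x ∈ V}) : ℝ) with hvdef
  have hvmono : ∀ a b : ℕ, a ≤ b → v a ≤ v b := by
    intro a b hab
    rw [hvdef]
    apply Subtype.coe_le_coe.mpr
    apply e.monotone
    apply Fin.mk_le_mk.mpr
    omega
  have hvmem : ∀ t, v t ∈ V := by
    intro t; rw [hvdef]; exact (e _).2
  have hvidx : ∀ a : Fin s, v a.1 = ((e a : {x // x ∈ V}) : ℝ) := by
    intro a
    have hfin : (⟨min (a.1 : ℕ) (s-1), by omega⟩ : Fin s) = a := by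
      apply Fin.ext
      have := a.2
      simp only []
      omega
    show ((e ⟨min (a.1:ℕ) (s-1), by omega⟩ : {x // x ∈ V}) : ℝ) = ((e a : {x // x ∈ V}) : ℝ)
    rw [hfin]
  have hsurj : ∀ x, x ∈ V → ∃ t, t ≤ s - 1 ∧ v t = x := by
    intro x hx
    refine ⟨(e.symm ⟨x, hx⟩).1, by have := (e.symm ⟨x, hx⟩).2; omega, ?_⟩
    rw [hvidx (e.symm ⟨x, hx⟩)]
    rw [e.apply_symm_apply]
  have hstrict : ∀ t : ℕ, t + 1 ≤ s - 1 → v t < v (t+1) := by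
    intro t ht
    rw [hvdef]
    apply Subtype.coe_lt_coe.mpr
    apply e.strictMono
    apply Fin.mk_lt_mk.mpr
    omega
  have hmax : ∀ x, x ∈ V → x ≤ v (s-1) := by
    intro x hx
    obtain ⟨t, ht, rfl⟩ := hsurj x hx
    exact hvmono t (s-1) ht
  have hminv : ∀ x, x ∈ V → v 0 ≤ x := by
    intro x hx
    obtain ⟨t, _, rfl⟩ := hsurj x hx
    exact hvmono 0 t (Nat.zero_le t)
  have hpiV : p i ∈ V := Finset.mem_image_of_mem p (Finset.mem_univ i)
  have hpiv : p i ≤ v (s-1) := hmax _ hpiV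
  have hv0 : v 0 ≤ 0 := by
    obtain ⟨j0, hj0⟩ := hmin
    exact le_trans (hminv _ (Finset.mem_image_of_mem p (Finset.mem_univ j0))) hj0
  have hcut : ∀ t : ℕ, t + 1 ≤ s - 1 →
      (v (t+1) - v t)^3 ≤ M ∧ (v (t+1) - v t)^2 * v (t+1) ≤ M := by
    intro t ht
    apply hkey (v (t+1)) (v t)
    · obtain ⟨j, _, hj⟩ := Finset.mem_image.mp (hvmem (s-1))
      exact ⟨j, by rw [hj]; exact hvmono (t+1) (s-1) ht⟩
    · obtain ⟨j, _, hj⟩ := Finset.mem_image.mp (hvmem 0)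
      exact ⟨j, by rw [hj]; exact hvmono 0 t (Nat.zero_le t)⟩
    · exact hstrict t ht
    · intro j
      obtain ⟨t', ht', hvt'⟩ := hsurj (p j) (Finset.mem_image_of_mem p (Finset.mem_univ j))
      by_cases hle : t' ≤ t
      · left; rw [← hvt']; exact hvmono _ _ hle
      · right; rw [← hvt']; exact hvmono (t+1) t' (by omega)
  have hgapnn : ∀ t : ℕ, 0 ≤ v (t+1) - v t := by
    intro t
    have := hvmono t (t+1) (by omega)
    linarith
  constructor
  · -- part (i)
    have hgap1 : ∀ t ∈ range (s-1), v (t+1) - v t ≤ M ^ ((1:ℝ)/3) := by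
      intro t ht
      have ht' : t + 1 ≤ s - 1 := by
        have := Finset.mem_range.mp ht; omega
      exact le_cbrt (hgapnn t) (hcut t ht').1
    have hsum1 : v (s-1) - v 0 ≤ ((s-1 : ℕ):ℝ) * M^((1:ℝ)/3) := by
      rw [← Finset.sum_range_sub v (s-1)]
      calc ∑ t ∈ range (s-1), (v (t+1) - v t)
          ≤ (range (s-1)).card • (M^((1:ℝ)/3)) := Finset.sum_le_card_nsmul _ _ _ hgap1
        _ = ((s-1 : ℕ):ℝ) * M^((1:ℝ)/3) := by
            rw [Finset.card_range, nsmul_eq_mul]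
    have hcast : ((s-1 : ℕ):ℝ) ≤ (n:ℝ) - 1 := by
      have h1 : ((s-1 : ℕ):ℝ) ≤ ((n-1 : ℕ):ℝ) := Nat.cast_le.mpr (by omega)
      have h2 : ((n-1 : ℕ):ℝ) = (n:ℝ) - 1 := by
        have h3 : (1:ℕ) ≤ n := by omega
        push_cast [Nat.cast_sub h3]
        ring
      linarith
    have hMp : (0:ℝ) ≤ M^((1:ℝ)/3) := Real.rpow_nonneg hM.le _
    calc p i ≤ v (s-1) := hpiv
      _ ≤ ((s-1:ℕ):ℝ) * M^((1:ℝ)/3) := by linarith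
      _ ≤ ((n:ℝ)-1) * M^((1:ℝ)/3) := mul_le_mul_of_nonneg_right hcast hMp
      _ = M^((1:ℝ)/3) * ((n:ℝ)-1) := by ring
  · -- part (ii)
    intro h4
    have hn4 : (4:ℝ) ≤ (n:ℝ) := by exact_mod_cast h4
    have hn2 : (0:ℝ) < (n:ℝ) - 2 := by linarith
    set y : ℝ := (M * ((n:ℝ)-2)^2 / 4) ^ ((1:ℝ)/3) with hydef
    have hbase : (0:ℝ) < M * ((n:ℝ)-2)^2 / 4 := by positivity
    have hy : 0 < y := Real.rpow_pos_of_pos hbase _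
    have hy3 : y^3 = M * ((n:ℝ)-2)^2 / 4 := by
      rw [hydef, ← Real.rpow_natCast ((M * ((n:ℝ)-2)^2 / 4) ^ ((1:ℝ)/3)) 3,
        ← Real.rpow_mul hbase.le]
      norm_num
    set z : ℝ := 2*y/((n:ℝ)-2) with hzdef
    have hz : 0 < z := div_pos (by linarith) hn2
    have hzy : z^2 * y = M := by
      have h1 : z^2 * y = 4*y^3/((n:ℝ)-2)^2 := by
        rw [hzdef]; field_simp; ring
      rw [h1, hy3]
      field_simp
    by_cases hcase : v (s-1) ≤ y
    · linarith [hpiv]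
    · push_neg at hcase
      have hex : ∃ t, y ≤ v t := ⟨s-1, hcase.le⟩
      set k₀ := Nat.find hex with hk0def
      have hk0spec : y ≤ v k₀ := Nat.find_spec hex
      have hk0min : ∀ t, t < k₀ → ¬ y ≤ v t := fun t ht => Nat.find_min hex ht
      have hk0le : k₀ ≤ s - 1 := Nat.find_min' hex hcase.le
      have hk0pos : 1 ≤ k₀ := by
        by_contra h0
        have hk00 : k₀ = 0 := by omega
        have := hk0spec
        rw [hk00] at this
        linarith
      set K := s - 1 - (k₀ - 1) with hKdef
      have hKeq : k₀ - 1 + K = s - 1 := by omega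
      have htel2 : ∑ t ∈ range K, (v (k₀-1+(t+1)) - v (k₀-1+t)) = v (s-1) - v (k₀-1) := by
        have h := Finset.sum_range_sub (fun t => v (k₀-1+t)) K
        rw [hKeq] at h
        exact h
      have hgap2 : ∀ t ∈ range K, v (k₀-1+(t+1)) - v (k₀-1+t) ≤ z := by
        intro t ht
        have htK : t < K := Finset.mem_range.mp ht
        have heq : k₀-1+(t+1) = (k₀-1+t)+1 := by omega
        rw [heq]
        have ha1 : (k₀-1+t) + 1 ≤ s-1 := by omega
        have h := (hcut (k₀-1+t) ha1).2
        have hyv : y ≤ v ((k₀-1+t)+1) := le_trans hk0spec (hvmono k₀ _ (by omega))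
        have hnn : 0 ≤ v ((k₀-1+t)+1) - v (k₀-1+t) := hgapnn _
        apply le_of_sq_le_sq' hz.le
        have h2 : (v ((k₀-1+t)+1) - v (k₀-1+t))^2 * y ≤ z^2 * y := by
          calc (v ((k₀-1+t)+1) - v (k₀-1+t))^2 * y
              ≤ (v ((k₀-1+t)+1) - v (k₀-1+t))^2 * v ((k₀-1+t)+1) :=
                mul_le_mul_of_nonneg_left hyv (by positivity)
            _ ≤ M := h
            _ = z^2 * y := hzy.symm
        exact le_of_mul_le_mul_right h2 hy
      have hsum2 : v (s-1) - v (k₀-1) ≤ (K:ℝ) * z := by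
        rw [← htel2]
        calc ∑ t ∈ range K, (v (k₀-1+(t+1)) - v (k₀-1+t))
            ≤ (range K).card • z := Finset.sum_le_card_nsmul _ _ _ hgap2
          _ = (K:ℝ) * z := by rw [Finset.card_range, nsmul_eq_mul]
      have hvk1 : v (k₀-1) ≤ y := by
        have h1 : k₀ - 1 < k₀ := by omega
        have := hk0min (k₀-1) h1
        linarith [not_le.mp this]
      by_cases hK : K ≤ n - 2
      · have hKcast : (K:ℝ) ≤ (n:ℝ) - 2 := by
          have h1 : (K:ℝ) ≤ ((n-2:ℕ):ℝ) := Nat.cast_le.mpr hK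
          have h2 : ((n-2:ℕ):ℝ) = (n:ℝ) - 2 := by
            push_cast [Nat.cast_sub (by omega : (2:ℕ) ≤ n)]
            ring
          linarith
        have hz2 : ((n:ℝ)-2) * z = 2*y := by
          rw [hzdef]
          field_simp
        have hKz : (K:ℝ) * z ≤ ((n:ℝ)-2) * z := mul_le_mul_of_nonneg_right hKcast hz.le
        linarith [hpiv]
      · have hforce : K = n - 1 ∧ k₀ = 1 ∧ s = n := by omega
        obtain ⟨hK1, hk01, hsn'⟩ := hforce
        have hvk0 : v (k₀ - 1) ≤ 0 := by
          rw [hk01]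
          exact hv0
        have hKcast : (K:ℝ) = (n:ℝ) - 1 := by
          rw [hK1]
          push_cast [Nat.cast_sub (by omega : (1:ℕ) ≤ n)]
          ring
        have hfin : ((n:ℝ)-1) * z ≤ 3 * y := by
          have h9 : ((n:ℝ)-1) * z * ((n:ℝ)-2) = 2*y*((n:ℝ)-1) := by
            rw [hzdef]; field_simp
          have h10 : 2*y*((n:ℝ)-1) ≤ 3*y*((n:ℝ)-2) := by nlinarith [hy.le]
          have h11 := le_of_mul_le_mul_right
            (by linarith [h9] : ((n:ℝ)-1) * z * ((n:ℝ)-2) ≤ 3*y*((n:ℝ)-2)) hn2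
          linarith
        rw [hKcast] at hsum2
        linarith [hpiv]

private lemma const_eq' (M : ℝ) (hM : 0 ≤ M) (x : ℝ) (hx : 0 ≤ x) :
    3 * (M * x^2 / 4) ^ ((1:ℝ)/3) =
      M ^ ((1:ℝ)/3) * (((2:ℝ) ^ ((1:ℝ)/3) + (2:ℝ) ^ (-(2:ℝ)/3)) * x ^ ((2:ℝ)/3)) := by
  have hA : (M * x^2/4)^((1:ℝ)/3) = (M * x^2)^((1:ℝ)/3) / (4:ℝ)^((1:ℝ)/3) :=
    Real.div_rpow (by positivity) (by norm_num) _
  have hB : (M * x^2)^((1:ℝ)/3) = M^((1:ℝ)/3) * (x^2)^((1:ℝ)/3) :=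
    Real.mul_rpow hM (by positivity)
  have hx23 : (x^2)^((1:ℝ)/3) = x ^ ((2:ℝ)/3) := by
    rw [← Real.rpow_natCast x 2, ← Real.rpow_mul hx]; norm_num
  have h43 : (4:ℝ)^((1:ℝ)/3) = 2 ^ ((2:ℝ)/3) := by
    rw [show (4:ℝ) = 2^(2:ℕ) by norm_num, ← Real.rpow_natCast (2:ℝ) 2,
      ← Real.rpow_mul (by norm_num : (0:ℝ) ≤ 2)]
    norm_num
  have hp : (0:ℝ) < 2^((2:ℝ)/3) := Real.rpow_pos_of_pos (by norm_num) _
  have hc : (2:ℝ)^((1:ℝ)/3) + (2:ℝ)^(-(2:ℝ)/3) = 3 / 2^((2:ℝ)/3) := by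
    have h1 : (2:ℝ)^((1:ℝ)/3) * 2^((2:ℝ)/3) = 2 := by
      rw [← Real.rpow_add (by norm_num : (0:ℝ) < 2)]
      norm_num
    have h2 : (2:ℝ)^(-(2:ℝ)/3) * 2^((2:ℝ)/3) = 1 := by
      rw [← Real.rpow_add (by norm_num : (0:ℝ) < 2)]
      rw [show -(2:ℝ)/3 + 2/3 = 0 by ring, Real.rpow_zero]
    rw [eq_div_iff hp.ne', add_mul, h1, h2]
    norm_num
  rw [hA, hB, hx23, h43, hc]
  field_simp

/-- upper bound on the size of a normalized central configuration:
`max_i |q_i| ≤ M^{1/3}(n−1)` for `n ≥ 2`, and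
`max_i |q_i| ≤ M^{1/3}(2^{1/3}+2^{−2/3})(n−2)^{2/3}` for `n ≥ 4`. -/
theorem stmt5 (n : ℕ) (hn : 2 ≤ n) (m : Fin n → ℝ) (hm : ∀ i, 0 < m i)
    (q : Fin n → E2) (hinj : Function.Injective q) (hcc : CCeqs m q) :
    (∀ i, ‖q i‖ ≤ (∑ i, m i) ^ ((1 : ℝ) / 3) * ((n : ℝ) - 1)) ∧
    (4 ≤ n → ∀ i, ‖q i‖ ≤ (∑ i, m i) ^ ((1 : ℝ) / 3) *
      (((2 : ℝ) ^ ((1 : ℝ) / 3) + (2 : ℝ) ^ (-(2 : ℝ) / 3)) * ((n : ℝ) - 2) ^ ((2 : ℝ) / 3))) := by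
  have hne : (univ : Finset (Fin n)).Nonempty := ⟨⟨0, by omega⟩, Finset.mem_univ _⟩
  have hM : 0 < ∑ i, m i := Finset.sum_pos (fun i _ => hm i) hne
  have hn1 : (0:ℝ) ≤ (n:ℝ) - 1 := by
    have : (2:ℝ) ≤ (n:ℝ) := by exact_mod_cast hn
    linarith
  have main : ∀ i : Fin n, ‖q i‖ ≤ (∑ i, m i)^((1:ℝ)/3) * ((n:ℝ)-1) ∧
      (4 ≤ n → ‖q i‖ ≤ 3 * ((∑ i, m i) * ((n:ℝ)-2)^2 / 4)^((1:ℝ)/3)) := by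
    intro i
    by_cases h0 : q i = 0
    · constructor
      · rw [h0, norm_zero]
        exact mul_nonneg (Real.rpow_nonneg hM.le _) hn1
      · intro h4
        rw [h0, norm_zero]
        have hn2 : (0:ℝ) ≤ (n:ℝ) - 2 := by
          have : (4:ℝ) ≤ (n:ℝ) := by exact_mod_cast h4
          linarith
        have hbase : (0:ℝ) ≤ (∑ i, m i) * ((n:ℝ)-2)^2 / 4 := by
          apply div_nonneg _ (by norm_num)
          exact mul_nonneg hM.le (sq_nonneg _)
        exact mul_nonneg (by norm_num) (Real.rpow_nonneg hbase _)
    · set u : E2 := ‖q i‖⁻¹ • q i with hudef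
      have hqn : ‖q i‖ ≠ 0 := norm_ne_zero_iff.mpr h0
      have hqpos : 0 < ‖q i‖ := norm_pos_iff.mpr h0
      have hu : ‖u‖ = 1 := by
        rw [hudef, norm_smul, norm_inv, norm_norm]
        field_simp
      have hpi : ⟪q i, u⟫ = ‖q i‖ := by
        rw [hudef, real_inner_smul_right, real_inner_self_eq_norm_sq]
        field_simp
      have hmin : ∃ j, ⟪q j, u⟫ ≤ 0 := by
        by_contra hpos
        push_neg at hpos
        have hsum : 0 < ∑ j ∈ univ, m j * ⟪q j, u⟫ :=
          Finset.sum_pos (fun j _ => mul_pos (hm j) (hpos j)) hne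
        have := total_zero m q u hcc
        linarith
      have hres := oneD hn (∑ i, m i) hM (fun j => ⟪q j, u⟫) hmin
        (fun c₁ c₂ h1 h2 h3 h5 => cut_bounds m q u hm hinj hcc hu c₁ c₂ h1 h2 h3 h5) i
      constructor
      · have := hres.1
        rw [hpi] at this
        exact this
      · intro h4
        have := hres.2 h4
        rw [hpi] at this
        exact this
  constructor
  · intro i
    exact (main i).1
  · intro h4 i
    have h2 := (main i).2 h4
    have hn2 : (0:ℝ) ≤ (n:ℝ) - 2 := by
      have : (4:ℝ) ≤ (n:ℝ) := by exact_mod_cast h4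
      linarith
    rw [const_eq' (∑ i, m i) hM.le ((n:ℝ)-2) hn2] at h2
    exact h2
end

section
/- Let N ≥ 2 and k ≥ 1. For each s ∈ ℕ let m_1(s), …, m_N(s) and μ_1(s), …, μ_k(s) be positive masses and let (q_1(s), …, q_N(s), p_1(s), …, p_k(s)) be a normalized central configuration of the N + k bodies with these masses. Assume that as s → ∞: m_i(s) → m̄_i > 0 for i = 1, …, N; μ_j(s) → 0 for j = 1, …, k; q_i(s) → q̄_i for i = 1, …, N; and p_j(s) → p̄_j for j = 1, …, k. Then the points q̄_1, …, q̄_N are pairwise distinct and (q̄_1, …, q̄_N) is a normalized central configuration for the masses m̄_1, …, m̄_N, i.e. q̄_i = Σ_{j≠i, j≤N} (m̄_j / |q̄_i − q̄_j|³)(q̄_i − q̄_j) for every i = 1, …, N. -/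
open Finset Filter Topology

/-- the "I = U" inequality extraction -/
lemma key_ineq {ι : Type} [Fintype ι] [DecidableEq ι] (M : ι → ℝ) (Q : ι → E2)
    (hM : ∀ i, 0 < M i) (hQ : Function.Injective Q) (hcc : CCeqs M Q) (a b : ι) (hab : a ≠ b) :
    M a * M b / ‖Q a - Q b‖ ≤ 2 * ∑ i, M i * ‖Q i‖ ^ 2 := by
  have hr : ∀ i j : ι, i ≠ j → ‖Q i - Q j‖ ≠ 0 := by
    intro i j h
    simp only [ne_eq, norm_eq_zero, sub_eq_zero]
    exact fun e => h (hQ e)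
  set f : ι → ι → ℝ := fun i j =>
    M i * ((M j / ‖Q i - Q j‖ ^ 3) * inner ℝ (Q i - Q j) (Q i)) with hf
  have hS : ∀ i, M i * ‖Q i‖ ^ 2 = ∑ j ∈ univ.filter (· ≠ i), f i j := by
    intro i
    symm
    simp only [hf]
    rw [← mul_sum]
    congr 1
    simp_rw [← real_inner_smul_left]
    rw [← sum_inner, ← hcc i, real_inner_self_eq_norm_sq]
  have swap : ∀ g : ι → ι → ℝ,
      (∑ i, ∑ j ∈ univ.filter (· ≠ i), g i j) = ∑ i, ∑ j ∈ univ.filter (· ≠ i), g j i := by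
    intro g
    exact Finset.sum_comm' (fun x y => by
      simp only [mem_univ, true_and, and_true, mem_filter]
      exact ne_comm)
  have hpair : ∀ i j : ι, i ≠ j → f i j + f j i = M i * M j / ‖Q i - Q j‖ := by
    intro i j hij
    have hr3 : ‖Q j - Q i‖ = ‖Q i - Q j‖ := norm_sub_rev _ _
    have hneg : (inner ℝ (Q j - Q i) (Q j) : ℝ) = - inner ℝ (Q i - Q j) (Q j) := by
      rw [show Q j - Q i = -(Q i - Q j) by abel, inner_neg_left]
    have hAB : (inner ℝ (Q i - Q j) (Q i) : ℝ) - inner ℝ (Q i - Q j) (Q j)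
        = ‖Q i - Q j‖ ^ 2 := by
      rw [← inner_sub_right, real_inner_self_eq_norm_sq]
    have h0 := hr i j hij
    set A := (inner ℝ (Q i - Q j) (Q i) : ℝ) with hA
    set B := (inner ℝ (Q i - Q j) (Q j) : ℝ) with hB
    simp only [hf, hr3, hneg, ← hA, ← hB]
    field_simp
    linear_combination (M i * M j) * hAB
  have h2S : 2 * (∑ i, M i * ‖Q i‖ ^ 2)
      = ∑ i, ∑ j ∈ univ.filter (· ≠ i), M i * M j / ‖Q i - Q j‖ := by
    have e1 : (∑ i, M i * ‖Q i‖ ^ 2) = ∑ i, ∑ j ∈ univ.filter (· ≠ i), f i j :=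
      Finset.sum_congr rfl fun i _ => hS i
    rw [two_mul, e1]
    nth_rewrite 2 [swap f]
    rw [← Finset.sum_add_distrib]
    refine Finset.sum_congr rfl fun i _ => ?_
    rw [← Finset.sum_add_distrib]
    refine Finset.sum_congr rfl fun j hj => ?_
    simp only [mem_filter, mem_univ, true_and] at hj
    exact hpair i j (Ne.symm hj)
  have hnn : ∀ i j : ι, 0 ≤ M i * M j / ‖Q i - Q j‖ := fun i j =>
    div_nonneg (mul_nonneg (hM i).le (hM j).le) (norm_nonneg _)
  rw [h2S]
  calc M a * M b / ‖Q a - Q b‖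
      ≤ ∑ j ∈ univ.filter (· ≠ a), M a * M j / ‖Q a - Q j‖ := by
        refine Finset.single_le_sum (fun j _ => hnn a j) ?_
        simp [hab.symm]
    _ ≤ ∑ i, ∑ j ∈ univ.filter (· ≠ i), M i * M j / ‖Q i - Q j‖ :=
        Finset.single_le_sum
          (f := fun i => ∑ j ∈ univ.filter (· ≠ i), M i * M j / ‖Q i - Q j‖)
          (fun i _ => Finset.sum_nonneg fun j _ => hnn i j) (mem_univ a)

/-- antisymmetric double sums vanish -/
lemma antisym_sum {ι : Type} [DecidableEq ι] (C : Finset ι) (F : ι → ι → E2)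
    (hF : ∀ a b, a ≠ b → F a b = - F b a) :
    ∑ a ∈ C, ∑ b ∈ C.filter (· ≠ a), F a b = 0 := by
  have swap : (∑ a ∈ C, ∑ b ∈ C.filter (· ≠ a), F a b)
      = ∑ a ∈ C, ∑ b ∈ C.filter (· ≠ a), F b a := by
    exact Finset.sum_comm' (fun x y => by
      simp only [mem_filter]
      constructor
      · rintro ⟨hx, hy, hne⟩; exact ⟨⟨hx, Ne.symm hne⟩, hy⟩
      · rintro ⟨⟨hx, hne⟩, hy⟩; exact ⟨hx, hy, Ne.symm hne⟩)
  have h : (∑ a ∈ C, ∑ b ∈ C.filter (· ≠ a), F a b)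
      = - ∑ a ∈ C, ∑ b ∈ C.filter (· ≠ a), F a b := by
    nth_rewrite 1 [swap]
    rw [← Finset.sum_neg_distrib]
    refine Finset.sum_congr rfl fun a _ => ?_
    rw [← Finset.sum_neg_distrib]
    refine Finset.sum_congr rfl fun b hb => ?_
    simp only [mem_filter] at hb
    rw [hF b a hb.2]
  have h2 : (2 : ℝ) • (∑ a ∈ C, ∑ b ∈ C.filter (· ≠ a), F a b) = 0 := by
    rw [two_smul]
    nth_rewrite 2 [h]
    simp
  simpa using (smul_eq_zero.mp h2).resolve_left (by norm_num)

/-- in the limit of light masses tending to zero, the heavy bodies of a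
sequence of normalized central configurations of `N + k` bodies converge to pairwise
distinct points forming a normalized central configuration for the limit masses. -/
theorem stmt7 (N k : ℕ) (hN : 2 ≤ N) (hk : 1 ≤ k)
    (m : ℕ → Fin N → ℝ) (μ : ℕ → Fin k → ℝ)
    (q : ℕ → Fin N → E2) (p : ℕ → Fin k → E2)
    (hm : ∀ s i, 0 < m s i) (hμ : ∀ s j, 0 < μ s j)
    (hinj : ∀ s, Function.Injective (Sum.elim (q s) (p s)))
    (hcc : ∀ s, CCeqs (Sum.elim (m s) (μ s)) (Sum.elim (q s) (p s)))
    (mbar : Fin N → ℝ) (hmbar : ∀ i, 0 < mbar i)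
    (qbar : Fin N → E2) (pbar : Fin k → E2)
    (hmlim : ∀ i, Tendsto (fun s => m s i) atTop (𝓝 (mbar i)))
    (hμlim : ∀ j, Tendsto (fun s => μ s j) atTop (𝓝 (0 : ℝ)))
    (hqlim : ∀ i, Tendsto (fun s => q s i) atTop (𝓝 (qbar i)))
    (hplim : ∀ j, Tendsto (fun s => p s j) atTop (𝓝 (pbar j))) :
    Function.Injective qbar ∧ CCeqs mbar qbar := by
  classical
  set M : ℕ → (Fin N ⊕ Fin k) → ℝ := fun s => Sum.elim (m s) (μ s) with hMdef
  set Q : ℕ → (Fin N ⊕ Fin k) → E2 := fun s => Sum.elim (q s) (p s) with hQdef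
  set Mb : (Fin N ⊕ Fin k) → ℝ := Sum.elim mbar (fun _ => 0) with hMbdef
  set Qb : (Fin N ⊕ Fin k) → E2 := Sum.elim qbar pbar with hQbdef
  have hccMQ : ∀ s, CCeqs (M s) (Q s) := hcc
  have hinjMQ : ∀ s, Function.Injective (Q s) := hinj
  have hMpos : ∀ s a, 0 < M s a := by
    rintro s (i | j)
    · simpa [hMdef] using hm s i
    · simpa [hMdef] using hμ s j
  have hMlim : ∀ a, Tendsto (fun s => M s a) atTop (𝓝 (Mb a)) := by
    rintro (i | j)
    · simpa [hMdef, hMbdef] using hmlim i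
    · simpa [hMdef, hMbdef] using hμlim j
  have hQlim : ∀ a, Tendsto (fun s => Q s a) atTop (𝓝 (Qb a)) := by
    rintro (i | j)
    · simpa [hQdef, hQbdef] using hqlim i
    · simpa [hQdef, hQbdef] using hplim j
  -- Part 1: injectivity of the limit of heavy bodies
  have hqinj : Function.Injective qbar := by
    intro a b hab
    by_contra hne
    have hab' : (Sum.inl a : Fin N ⊕ Fin k) ≠ Sum.inl b := by simp [hne]
    have key : ∀ s, m s a * m s b ≤
        (2 * ∑ i2, M s i2 * ‖Q s i2‖ ^ 2) * ‖q s a - q s b‖ := by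
      intro s
      have h1 := key_ineq (M s) (Q s) (hMpos s) (hinjMQ s) (hccMQ s)
        (Sum.inl a) (Sum.inl b) hab'
      have hpos : 0 < ‖q s a - q s b‖ := by
        rw [norm_pos_iff, sub_ne_zero]
        intro e
        exact hab' (hinj s (by simpa [hQdef] using e))
      have h2 : M s (Sum.inl a) * M s (Sum.inl b) = m s a * m s b := by simp [hMdef]
      have h3 : Q s (Sum.inl a) - Q s (Sum.inl b) = q s a - q s b := by simp [hQdef]
      rw [h2, h3, div_le_iff₀ hpos] at h1
      exact h1
    have hT1 : Tendsto (fun s => m s a * m s b) atTop (𝓝 (mbar a * mbar b)) :=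
      (hmlim a).mul (hmlim b)
    have hT2 : Tendsto (fun s => (2 * ∑ i2, M s i2 * ‖Q s i2‖ ^ 2) * ‖q s a - q s b‖)
        atTop (𝓝 ((2 * ∑ i2, Mb i2 * ‖Qb i2‖ ^ 2) * ‖qbar a - qbar b‖)) := by
      refine Tendsto.mul (Tendsto.mul tendsto_const_nhds
        (tendsto_finset_sum _ fun i2 _ => (hMlim i2).mul (((hQlim i2).norm).pow 2))) ?_
      exact ((hqlim a).sub (hqlim b)).norm
    rw [hab, sub_self, norm_zero, mul_zero] at hT2
    have hle : mbar a * mbar b ≤ 0 := le_of_tendsto_of_tendsto' hT1 hT2 key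
    nlinarith [hmbar a, hmbar b]
  refine ⟨hqinj, fun i => ?_⟩
  -- the cluster of bodies converging to qbar i
  set C : Finset (Fin N ⊕ Fin k) := univ.filter (fun a => Qb a = qbar i) with hC
  have hiC : Sum.inl i ∈ C := by simp [hC, hQbdef]
  set T : ℕ → (Fin N ⊕ Fin k) → (Fin N ⊕ Fin k) → E2 := fun s a b =>
    (M s a * M s b / ‖Q s a - Q s b‖ ^ 3) • (Q s a - Q s b) with hTdef
  have hTanti : ∀ s a b, a ≠ b → T s a b = - T s b a := by
    intro s a b _
    simp only [hTdef]
    rw [show Q s b - Q s a = -(Q s a - Q s b) by abel]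
    rw [norm_neg, smul_neg, neg_neg, mul_comm (M s b)]
  have hclust : ∀ s, ∑ a ∈ C, M s a • Q s a
      = ∑ a ∈ C, ∑ b ∈ univ.filter (· ∉ C), T s a b := by
    intro s
    have step : ∀ a ∈ C, M s a • Q s a
        = (∑ b ∈ C.filter (· ≠ a), T s a b) + ∑ b ∈ univ.filter (· ∉ C), T s a b := by
      intro a haC
      have e2 : M s a • Q s a = ∑ b ∈ univ.filter (· ≠ a), T s a b := by
        conv_lhs => rw [hccMQ s a]
        rw [smul_sum]
        refine Finset.sum_congr rfl fun b _ => ?_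
        rw [smul_smul, ← mul_div_assoc]
      rw [e2, ← Finset.sum_filter_add_sum_filter_not (univ.filter (· ≠ a)) (· ∈ C) (T s a)]
      congr 1
      · refine Finset.sum_congr ?_ fun _ _ => rfl
        ext b
        simp only [mem_filter, mem_univ, true_and]
        tauto
      · refine Finset.sum_congr ?_ fun _ _ => rfl
        ext b
        simp only [mem_filter, mem_univ, true_and, and_iff_right_iff_imp]
        intro hb e
        exact hb (e ▸ haC)
    rw [Finset.sum_congr rfl step, Finset.sum_add_distrib,
      antisym_sum C (T s) (hTanti s), zero_add]
  have hMbzero : ∀ a ∈ C, a ≠ Sum.inl i → Mb a = 0 := by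
    rintro (a' | j) haC hne
    · exfalso
      simp only [hC, mem_filter, mem_univ, true_and, hQbdef, Sum.elim_inl] at haC
      exact hne (by rw [hqinj haC])
    · simp [hMbdef]
  have hL : Tendsto (fun s => ∑ a ∈ C, M s a • Q s a) atTop (𝓝 (mbar i • qbar i)) := by
    have h1 : Tendsto (fun s => ∑ a ∈ C, M s a • Q s a) atTop (𝓝 (∑ a ∈ C, Mb a • Qb a)) :=
      tendsto_finset_sum _ fun a _ => (hMlim a).smul (hQlim a)
    have h2 : ∑ a ∈ C, Mb a • Qb a = mbar i • qbar i := by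
      rw [Finset.sum_eq_single_of_mem (Sum.inl i) hiC
        (fun a haC hne => by rw [hMbzero a haC hne, zero_smul])]
      simp [hMbdef, hQbdef]
    rwa [h2] at h1
  have hd0 : ∀ a ∈ C, ∀ b ∈ univ.filter (· ∉ C), Qb a - Qb b ≠ 0 := by
    intro a haC b hb
    simp only [hC, mem_filter, mem_univ, true_and] at haC hb
    rw [sub_ne_zero, haC]
    exact fun e => hb (by simp [hC, ← e])
  have hR : Tendsto (fun s => ∑ a ∈ C, ∑ b ∈ univ.filter (· ∉ C), T s a b) atTop
      (𝓝 (∑ a ∈ C, ∑ b ∈ univ.filter (· ∉ C),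
        (Mb a * Mb b / ‖Qb a - Qb b‖ ^ 3) • (Qb a - Qb b))) := by
    refine tendsto_finset_sum _ fun a ha => tendsto_finset_sum _ fun b hb => ?_
    have hne : (‖Qb a - Qb b‖ : ℝ) ^ 3 ≠ 0 :=
      pow_ne_zero _ (norm_ne_zero_iff.mpr (hd0 a ha b hb))
    exact (((hMlim a).mul (hMlim b)).div
      ((((hQlim a).sub (hQlim b)).norm).pow 3) hne).smul ((hQlim a).sub (hQlim b))
  have hR' : Tendsto (fun s => ∑ a ∈ C, M s a • Q s a) atTop
      (𝓝 (∑ a ∈ C, ∑ b ∈ univ.filter (· ∉ C),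
        (Mb a * Mb b / ‖Qb a - Qb b‖ ^ 3) • (Qb a - Qb b))) :=
    hR.congr fun s => (hclust s).symm
  have heq := tendsto_nhds_unique hL hR'
  -- now reduce the limit RHS
  have hV : (∑ a ∈ C, ∑ b ∈ univ.filter (· ∉ C),
        (Mb a * Mb b / ‖Qb a - Qb b‖ ^ 3) • (Qb a - Qb b))
      = mbar i • ∑ j ∈ univ.filter (· ≠ i),
        (mbar j / ‖qbar i - qbar j‖ ^ 3) • (qbar i - qbar j) := by
    rw [Finset.sum_eq_single_of_mem (Sum.inl i) hiC
      (fun a haC hne => Finset.sum_eq_zero fun b _ => by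
        rw [hMbzero a haC hne, zero_mul, zero_div, zero_smul])]
    have e1 : (∑ b ∈ univ.filter (· ∉ C),
          (Mb (Sum.inl i) * Mb b / ‖Qb (Sum.inl i) - Qb b‖ ^ 3) • (Qb (Sum.inl i) - Qb b))
        = ∑ b : Fin N ⊕ Fin k,
          (Mb (Sum.inl i) * Mb b / ‖Qb (Sum.inl i) - Qb b‖ ^ 3) • (Qb (Sum.inl i) - Qb b) := by
      refine Finset.sum_subset (Finset.filter_subset _ _) fun b _ hb => ?_
      simp only [mem_filter, mem_univ, true_and, not_not] at hb
      have hbC : Qb b = qbar i := by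
        simpa only [hC, mem_filter, mem_univ, true_and] using hb
      rw [show Qb (Sum.inl i) - Qb b = 0 by
        rw [hbC]; simp [hQbdef]]
      simp
    rw [e1, Fintype.sum_sum_type]
    have e2 : (∑ j' : Fin k,
        (Mb (Sum.inl i) * Mb (Sum.inr j') / ‖Qb (Sum.inl i) - Qb (Sum.inr j')‖ ^ 3)
          • (Qb (Sum.inl i) - Qb (Sum.inr j'))) = 0 := by
      refine Finset.sum_eq_zero fun j' _ => ?_
      rw [show Mb (Sum.inr j') = 0 by simp [hMbdef], mul_zero, zero_div, zero_smul]
    rw [e2, add_zero]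
    have e3 : (∑ b' : Fin N,
        (Mb (Sum.inl i) * Mb (Sum.inl b') / ‖Qb (Sum.inl i) - Qb (Sum.inl b')‖ ^ 3)
          • (Qb (Sum.inl i) - Qb (Sum.inl b')))
        = ∑ b' ∈ univ.filter (· ≠ i),
        (mbar i * mbar b' / ‖qbar i - qbar b'‖ ^ 3) • (qbar i - qbar b') := by
      rw [← Finset.sum_subset (Finset.filter_subset (· ≠ i) univ) (fun b' _ hb' => by
        have : b' = i := by simpa using hb'
        simp [this])]
      refine Finset.sum_congr rfl fun b' _ => ?_
      simp [hMbdef, hQbdef]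
    rw [e3, smul_sum]
    refine Finset.sum_congr rfl fun b' _ => ?_
    rw [smul_smul, mul_div_assoc]
  rw [hV] at heq
  exact smul_right_injective E2 (hmbar i).ne' (by exact heq) ▸ rfl
end

section
/- Let N ≥ 2 and k ≥ 1. For each s ∈ ℕ let m_1(s), …, m_N(s) and μ_1(s), …, μ_k(s) be positive masses and let (q_1(s), …, q_N(s), p_1(s), …, p_k(s)) be a normalized central configuration of the N + k bodies with these masses. Assume that as s → ∞: m_i(s) → m̄_i > 0 for i = 1, …, N; μ_j(s) → 0 for j = 1, …, k; q_i(s) → q̄_i for i = 1, …, N; and p_j(s) → p̄_j for j = 1, …, k. Then for every j = 1, …, k: p̄_j ≠ q̄_i for all i = 1, …, N, and p̄_j is a relative normalized central configuration of the restricted (N+1)-body problem for the limit configuration, i.e. p̄_j = Σ_{i=1}^{N} (m̄_i / |p̄_j − q̄_i|³)(p̄_j − q̄_i). -/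
open Finset Filter Topology
open scoped RealInnerProductSpace

section Aux

variable {ι : Type} [DecidableEq ι]

lemma self_eq_neg_zero {V : Type*} [AddCommGroup V] [Module ℝ V] {v : V} (h : v = -v) : v = 0 := by
  have h2 : (2 : ℝ) • v = 0 := by
    rw [two_smul]
    nth_rewrite 2 [h]
    simp
  have := smul_eq_zero.mp h2
  simpa using this.resolve_left (by norm_num)

lemma filter_to_full {M : Type*} [AddCommMonoid M] (t : Finset ι) (G : ι → ι → M)
    (hdiag : ∀ a, G a a = 0) (a : ι) :
    ∑ b ∈ t.filter (· ≠ a), G a b = ∑ b ∈ t, G a b := by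
  rw [← Finset.sum_filter_add_sum_filter_not t (· ≠ a) (G a)]
  have h0 : ∑ b ∈ t.filter (fun b => ¬b ≠ a), G a b = 0 := by
    apply Finset.sum_eq_zero
    intro b hb
    have hba : b = a := not_not.mp (Finset.mem_filter.mp hb).2
    rw [hba]; exact hdiag a
  rw [h0, add_zero]

lemma antisym_zero (t : Finset ι) (G : ι → ι → E2) (h : ∀ a b, G a b = -G b a) :
    ∑ a ∈ t, ∑ b ∈ t.filter (· ≠ a), G a b = 0 := by
  have hdiag : ∀ a, G a a = 0 := fun a => self_eq_neg_zero (h a a)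
  have hfull : ∑ a ∈ t, ∑ b ∈ t.filter (· ≠ a), G a b = ∑ a ∈ t, ∑ b ∈ t, G a b :=
    Finset.sum_congr rfl fun a _ => filter_to_full t G hdiag a
  rw [hfull]
  apply self_eq_neg_zero
  calc ∑ a ∈ t, ∑ b ∈ t, G a b = ∑ a ∈ t, ∑ b ∈ t, G b a := Finset.sum_comm
    _ = ∑ a ∈ t, ∑ b ∈ t, -G a b :=
        Finset.sum_congr rfl fun a _ => Finset.sum_congr rfl fun b _ => h b a
    _ = -∑ a ∈ t, ∑ b ∈ t, G a b := by simp only [Finset.sum_neg_distrib]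

lemma antisym_inner_nonneg (t : Finset ι) (G : ι → ι → E2) (h : ∀ a b, G a b = -G b a)
    (y : ι → E2) (z : E2) (hnn : ∀ a b, 0 ≤ ⟪G a b, y a - y b⟫) :
    0 ≤ ∑ a ∈ t, ∑ b ∈ t.filter (· ≠ a), ⟪G a b, y a - z⟫ := by
  have hdiag : ∀ a, G a a = 0 := fun a => self_eq_neg_zero (h a a)
  have hfull : ∑ a ∈ t, ∑ b ∈ t.filter (· ≠ a), ⟪G a b, y a - z⟫
      = ∑ a ∈ t, ∑ b ∈ t, ⟪G a b, y a - z⟫ :=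
    Finset.sum_congr rfl fun a _ =>
      filter_to_full t (fun a' b' => ⟪G a' b', y a' - z⟫)
        (fun a' => by show (inner ℝ (G a' a') (y a' - z) : ℝ) = 0; rw [hdiag a']; exact inner_zero_left _) a
  rw [hfull]
  have hB : ∑ a ∈ t, ∑ b ∈ t, ⟪G a b, y b - z⟫ = -∑ a ∈ t, ∑ b ∈ t, ⟪G a b, y a - z⟫ := by
    calc ∑ a ∈ t, ∑ b ∈ t, ⟪G a b, y b - z⟫
        = ∑ a ∈ t, ∑ b ∈ t, ⟪G b a, y a - z⟫ := Finset.sum_comm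
      _ = ∑ a ∈ t, ∑ b ∈ t, -⟪G a b, y a - z⟫ := by
          refine Finset.sum_congr rfl fun a _ => Finset.sum_congr rfl fun b _ => ?_
          rw [h b a, inner_neg_left]
      _ = -∑ a ∈ t, ∑ b ∈ t, ⟪G a b, y a - z⟫ := by
          simp only [Finset.sum_neg_distrib]
  have hdiff : (∑ a ∈ t, ∑ b ∈ t, ⟪G a b, y a - z⟫) - ∑ a ∈ t, ∑ b ∈ t, ⟪G a b, y b - z⟫
      = ∑ a ∈ t, ∑ b ∈ t, ⟪G a b, y a - y b⟫ := by
    rw [← Finset.sum_sub_distrib]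
    refine Finset.sum_congr rfl fun a _ => ?_
    rw [← Finset.sum_sub_distrib]
    refine Finset.sum_congr rfl fun b _ => ?_
    rw [← inner_sub_right]
    congr 1
    abel
  have hge : 0 ≤ ∑ a ∈ t, ∑ b ∈ t, ⟪G a b, y a - y b⟫ :=
    Finset.sum_nonneg fun a _ => Finset.sum_nonneg fun b _ => hnn a b
  rw [← hdiff, hB] at hge
  linarith

lemma G_antisym (Mm : ι → ℝ) (X : ι → E2) (a b : ι) :
    Mm a • ((Mm b / ‖X a - X b‖ ^ 3) • (X a - X b))
      = -(Mm b • ((Mm a / ‖X b - X a‖ ^ 3) • (X b - X a))) := by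
  rw [smul_smul, smul_smul, norm_sub_rev (X b) (X a)]
  rw [show X b - X a = -(X a - X b) from (neg_sub _ _).symm, smul_neg, neg_neg]
  rw [show Mm b * (Mm a / ‖X a - X b‖ ^ 3) = Mm a * (Mm b / ‖X a - X b‖ ^ 3) from by ring]

lemma cc_split {ι : Type} [Fintype ι] [DecidableEq ι] (M : ι → ℝ) (x : ι → E2)
    (h : CCeqs M x) (S : Finset ι) (a : ι) (ha : a ∈ S) :
    x a = (∑ b ∈ S.filter (· ≠ a), (M b / ‖x a - x b‖ ^ 3) • (x a - x b))
        + ∑ b ∈ Sᶜ, (M b / ‖x a - x b‖ ^ 3) • (x a - x b) := by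
  conv_lhs => rw [h a]
  rw [← Finset.sum_filter_add_sum_filter_not (Finset.univ.filter (· ≠ a)) (· ∈ S)]
  congr 1
  · apply Finset.sum_congr _ fun _ _ => rfl
    ext b
    simp only [Finset.mem_filter, Finset.mem_univ, true_and, Finset.filter_filter]
    tauto
  · apply Finset.sum_congr _ fun _ _ => rfl
    ext b
    simp only [Finset.mem_filter, Finset.mem_univ, true_and, Finset.mem_compl,
      Finset.filter_filter]
    constructor
    · tauto
    · intro hb; exact ⟨fun hba => hb (hba ▸ ha), hb⟩

lemma cluster_tendsto {ι : Type} [Fintype ι] [DecidableEq ι]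
    (M : ℕ → ι → ℝ) (x : ℕ → ι → E2) (Mb : ι → ℝ) (xb : ι → E2)
    (hM : ∀ b, Tendsto (fun s => M s b) atTop (𝓝 (Mb b)))
    (hx : ∀ b, Tendsto (fun s => x s b) atTop (𝓝 (xb b)))
    (hcc : ∀ s, CCeqs (M s) (x s))
    (S : Finset ι) (c : E2) (hS : ∀ a ∈ S, xb a = c) (hSc : ∀ b, b ∉ S → xb b ≠ c)
    (a : ι) (ha : a ∈ S) :
    Tendsto (fun s => ∑ b ∈ S.filter (· ≠ a), (M s b / ‖x s a - x s b‖ ^ 3) • (x s a - x s b))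
      atTop (𝓝 (c - ∑ b ∈ Sᶜ, (Mb b / ‖c - xb b‖ ^ 3) • (c - xb b))) := by
  have hid : ∀ s, ∑ b ∈ S.filter (· ≠ a), (M s b / ‖x s a - x s b‖ ^ 3) • (x s a - x s b)
      = x s a - ∑ b ∈ Sᶜ, (M s b / ‖x s a - x s b‖ ^ 3) • (x s a - x s b) := by
    intro s
    have h := cc_split (M s) (x s) (hcc s) S a ha
    exact eq_sub_of_add_eq h.symm
  have hext : Tendsto (fun s => ∑ b ∈ Sᶜ, (M s b / ‖x s a - x s b‖ ^ 3) • (x s a - x s b))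
      atTop (𝓝 (∑ b ∈ Sᶜ, (Mb b / ‖c - xb b‖ ^ 3) • (c - xb b))) := by
    apply tendsto_finset_sum
    intro b hb
    have hbne : xb b ≠ c := hSc b (Finset.mem_compl.mp hb)
    have hsub : Tendsto (fun s => x s a - x s b) atTop (𝓝 (c - xb b)) := by
      have h := (hx a).sub (hx b); rwa [hS a ha] at h
    have hne : ‖c - xb b‖ ^ 3 ≠ 0 := by
      apply pow_ne_zero
      rw [norm_ne_zero_iff]
      exact sub_ne_zero.mpr (Ne.symm hbne)
    exact ((hM b).div (hsub.norm.pow 3) hne).smul hsub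
  have hxa : Tendsto (fun s => x s a) atTop (𝓝 c) := by rw [← hS a ha]; exact hx a
  exact Tendsto.congr (fun s => (hid s).symm) (hxa.sub hext)

end Aux

/-- in the limit of light masses tending to zero, each limit point of a
light body is distinct from all limit heavy bodies and is a relative normalized central
configuration of the restricted `(N+1)`-body problem for the limit configuration:
`p̄_j = Σ_i (m̄_i / |p̄_j − q̄_i|³)(p̄_j − q̄_i)`. -/
theorem stmt8 (N k : ℕ) (hN : 2 ≤ N) (hk : 1 ≤ k)
    (m : ℕ → Fin N → ℝ) (μ : ℕ → Fin k → ℝ)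
    (q : ℕ → Fin N → E2) (p : ℕ → Fin k → E2)
    (hm : ∀ s i, 0 < m s i) (hμ : ∀ s j, 0 < μ s j)
    (hinj : ∀ s, Function.Injective (Sum.elim (q s) (p s)))
    (hcc : ∀ s, CCeqs (Sum.elim (m s) (μ s)) (Sum.elim (q s) (p s)))
    (mbar : Fin N → ℝ) (hmbar : ∀ i, 0 < mbar i)
    (qbar : Fin N → E2) (pbar : Fin k → E2)
    (hmlim : ∀ i, Tendsto (fun s => m s i) atTop (𝓝 (mbar i)))
    (hμlim : ∀ j, Tendsto (fun s => μ s j) atTop (𝓝 (0 : ℝ)))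
    (hqlim : ∀ i, Tendsto (fun s => q s i) atTop (𝓝 (qbar i)))
    (hplim : ∀ j, Tendsto (fun s => p s j) atTop (𝓝 (pbar j))) :
    ∀ j, (∀ i, pbar j ≠ qbar i) ∧
      pbar j = ∑ i, (mbar i / ‖pbar j - qbar i‖ ^ 3) • (pbar j - qbar i) := by
  classical
  let Ms : ℕ → (Fin N ⊕ Fin k) → ℝ := fun s => Sum.elim (m s) (μ s)
  let xs : ℕ → (Fin N ⊕ Fin k) → E2 := fun s => Sum.elim (q s) (p s)
  let Mb : (Fin N ⊕ Fin k) → ℝ := Sum.elim mbar (fun _ => 0)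
  let xb : (Fin N ⊕ Fin k) → E2 := Sum.elim qbar pbar
  have hMt : ∀ b, Tendsto (fun s => Ms s b) atTop (𝓝 (Mb b)) := by
    rintro (i | j)
    · exact hmlim i
    · exact hμlim j
  have hxt : ∀ b, Tendsto (fun s => xs s b) atTop (𝓝 (xb b)) := by
    rintro (i | j)
    · exact hqlim i
    · exact hplim j
  have hMpos : ∀ s b, 0 < Ms s b := by
    rintro s (i | j)
    · exact hm s i
    · exact hμ s j
  have hccs : ∀ s, CCeqs (Ms s) (xs s) := hcc
  have hinjs : ∀ s, Function.Injective (xs s) := hinj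
  -- KEY: the limit of a heavy body is distinct from the limit of any other body
  have key : ∀ (i : Fin N) (a : Fin N ⊕ Fin k), a ≠ Sum.inl i → xb a ≠ xb (Sum.inl i) := by
    intro i a hne heq
    set c : E2 := xb (Sum.inl i) with hc
    set S : Finset (Fin N ⊕ Fin k) := Finset.univ.filter (fun b => xb b = c) with hSdef
    have hmemS : ∀ b, b ∈ S ↔ xb b = c := fun b => by simp [hSdef]
    have hiS : Sum.inl i ∈ S := (hmemS _).mpr rfl
    have haS : a ∈ S := (hmemS _).mpr heq
    have hS : ∀ b ∈ S, xb b = c := fun b hb => (hmemS b).mp hb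
    have hSc : ∀ b, b ∉ S → xb b ≠ c := fun b hb h => hb ((hmemS b).mpr h)
    let IntF : ℕ → (Fin N ⊕ Fin k) → E2 := fun s b =>
      ∑ b' ∈ S.filter (· ≠ b), (Ms s b' / ‖xs s b - xs s b'‖ ^ 3) • (xs s b - xs s b')
    have hIntT : ∀ b ∈ S, Tendsto (fun s => IntF s b) atTop
        (𝓝 (c - ∑ b' ∈ Sᶜ, (Mb b' / ‖c - xb b'‖ ^ 3) • (c - xb b'))) :=
      fun b hb => cluster_tendsto Ms xs Mb xb hMt hxt hccs S c hS hSc b hb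
    set L : E2 := c - ∑ b' ∈ Sᶜ, (Mb b' / ‖c - xb b'‖ ^ 3) • (c - xb b') with hL
    set C : ℝ := ‖L‖ + 1 with hCdef
    have hC0 : 0 ≤ C := by positivity
    have hbnd : ∀ᶠ s in atTop, ∀ b, b ∈ S → ‖IntF s b‖ ≤ C := by
      rw [eventually_all]
      intro b
      rw [eventually_imp_distrib_left]
      intro hb
      have h1 : ∀ᶠ s in atTop, ‖IntF s b‖ < C :=
        (hIntT b hb).norm.eventually_lt_const (by rw [hCdef]; linarith)
      exact h1.mono fun s hs => hs.le
    set t : Finset (Fin N ⊕ Fin k) := S.erase (Sum.inl i) with htdef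
    have hat : a ∈ t := Finset.mem_erase.mpr ⟨hne, haS⟩
    have htS : t ⊆ S := Finset.erase_subset _ _
    have hmain : ∀ᶠ s in atTop,
        m s i ≤ C * ∑ b ∈ t, ‖xs s b - xs s (Sum.inl i)‖ ^ 2 := by
      filter_upwards [hbnd] with s hCbnd
      have hinjX := hinjs s
      have hrpos : ∀ b ∈ t, 0 < ‖xs s b - xs s (Sum.inl i)‖ := by
        intro b hb
        rw [norm_pos_iff, sub_ne_zero]
        exact fun hbe => (Finset.mem_erase.mp hb).1 (hinjX hbe)
      have hsplit : ∀ b ∈ t, S.filter (· ≠ b) = insert (Sum.inl i) (t.filter (· ≠ b)) := by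
        intro b hb
        have hbne : b ≠ Sum.inl i := (Finset.mem_erase.mp hb).1
        ext d
        simp only [Finset.mem_filter, Finset.mem_insert, Finset.mem_erase, htdef]
        constructor
        · rintro ⟨hdS, hdb⟩
          by_cases hdi : d = Sum.inl i
          · exact Or.inl hdi
          · exact Or.inr ⟨⟨hdi, hdS⟩, hdb⟩
        · rintro (rfl | ⟨⟨hdi, hdS⟩, hdb⟩)
          · exact ⟨hiS, fun hh => hbne hh.symm⟩
          · exact ⟨hdS, hdb⟩
      have hdecomp : ∀ b ∈ t, Ms s b * ⟪IntF s b, xs s b - xs s (Sum.inl i)⟫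
          = Ms s b * (Ms s (Sum.inl i) / ‖xs s b - xs s (Sum.inl i)‖)
            + ∑ b' ∈ t.filter (· ≠ b),
                ⟪Ms s b • ((Ms s b' / ‖xs s b - xs s b'‖ ^ 3) • (xs s b - xs s b')),
                  xs s b - xs s (Sum.inl i)⟫ := by
        intro b hb
        have hIb : IntF s b
            = (Ms s (Sum.inl i) / ‖xs s b - xs s (Sum.inl i)‖ ^ 3) • (xs s b - xs s (Sum.inl i))
              + ∑ b' ∈ t.filter (· ≠ b),
                  (Ms s b' / ‖xs s b - xs s b'‖ ^ 3) • (xs s b - xs s b') := by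
          show ∑ b' ∈ S.filter (· ≠ b), _ = _
          rw [hsplit b hb, Finset.sum_insert]
          intro hmem
          exact (Finset.mem_erase.mp (Finset.mem_filter.mp hmem).1).1 rfl
        rw [hIb, inner_add_left, sum_inner, mul_add]
        congr 1
        · rw [real_inner_smul_left, real_inner_self_eq_norm_sq]
          congr 1
          have hrb := (hrpos b hb).ne'
          field_simp
        · rw [Finset.mul_sum]
          exact Finset.sum_congr rfl fun b' _ => (real_inner_smul_left _ _ _).symm
      have hnonneg : 0 ≤ ∑ b ∈ t, ∑ b' ∈ t.filter (· ≠ b),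
          ⟪Ms s b • ((Ms s b' / ‖xs s b - xs s b'‖ ^ 3) • (xs s b - xs s b')),
            xs s b - xs s (Sum.inl i)⟫ := by
        apply antisym_inner_nonneg t _ (fun a' b' => G_antisym (Ms s) (xs s) a' b') (xs s)
          (xs s (Sum.inl i))
        intro a' b'
        rw [smul_smul, real_inner_smul_left, real_inner_self_eq_norm_sq]
        apply mul_nonneg
        apply mul_nonneg (hMpos s a').le
        · exact div_nonneg (hMpos s b').le (by positivity)
        · positivity
      have hTup : ∑ b ∈ t, Ms s b * ⟪IntF s b, xs s b - xs s (Sum.inl i)⟫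
          ≤ ∑ b ∈ t, Ms s b * (C * ‖xs s b - xs s (Sum.inl i)‖) := by
        apply Finset.sum_le_sum
        intro b hb
        apply mul_le_mul_of_nonneg_left _ (hMpos s b).le
        exact (real_inner_le_norm _ _).trans
          (mul_le_mul_of_nonneg_right (hCbnd b (htS hb)) (norm_nonneg _))
      have hTeq : ∑ b ∈ t, Ms s b * ⟪IntF s b, xs s b - xs s (Sum.inl i)⟫
          = (∑ b ∈ t, Ms s b * (Ms s (Sum.inl i) / ‖xs s b - xs s (Sum.inl i)‖))
            + ∑ b ∈ t, ∑ b' ∈ t.filter (· ≠ b),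
                ⟪Ms s b • ((Ms s b' / ‖xs s b - xs s b'‖ ^ 3) • (xs s b - xs s b')),
                  xs s b - xs s (Sum.inl i)⟫ := by
        rw [← Finset.sum_add_distrib]
        exact Finset.sum_congr rfl hdecomp
      have hkey2 : ∑ b ∈ t, Ms s b * (Ms s (Sum.inl i) / ‖xs s b - xs s (Sum.inl i)‖)
          ≤ ∑ b ∈ t, Ms s b * (C * ‖xs s b - xs s (Sum.inl i)‖) := by linarith
      obtain ⟨b, hb, hble⟩ := Finset.exists_le_of_sum_le ⟨a, hat⟩ hkey2
      have h1 : Ms s (Sum.inl i) / ‖xs s b - xs s (Sum.inl i)‖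
          ≤ C * ‖xs s b - xs s (Sum.inl i)‖ := (mul_le_mul_iff_right₀ (hMpos s b)).mp hble
      have h2 : Ms s (Sum.inl i) ≤ C * ‖xs s b - xs s (Sum.inl i)‖ * ‖xs s b - xs s (Sum.inl i)‖ :=
        (div_le_iff₀ (hrpos b hb)).mp h1
      have h4 : ‖xs s b - xs s (Sum.inl i)‖ ^ 2 ≤ ∑ b' ∈ t, ‖xs s b' - xs s (Sum.inl i)‖ ^ 2 :=
        Finset.single_le_sum (f := fun b' => ‖xs s b' - xs s (Sum.inl i)‖ ^ 2) (fun b' _ => sq_nonneg _) hb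
      have h5 : C * ‖xs s b - xs s (Sum.inl i)‖ ^ 2
          ≤ C * ∑ b' ∈ t, ‖xs s b' - xs s (Sum.inl i)‖ ^ 2 := mul_le_mul_of_nonneg_left h4 hC0
      have h6 : C * ‖xs s b - xs s (Sum.inl i)‖ * ‖xs s b - xs s (Sum.inl i)‖
          = C * ‖xs s b - xs s (Sum.inl i)‖ ^ 2 := by ring
      have h7 : Ms s (Sum.inl i) = m s i := rfl
      linarith [h2, h5]
    have hsum0 : Tendsto (fun s => C * ∑ b ∈ t, ‖xs s b - xs s (Sum.inl i)‖ ^ 2) atTop (𝓝 0) := by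
      have h1 : Tendsto (fun s => ∑ b ∈ t, ‖xs s b - xs s (Sum.inl i)‖ ^ 2) atTop
          (𝓝 (∑ b ∈ t, (0:ℝ))) := by
        apply tendsto_finset_sum
        intro b hb
        have h2 : Tendsto (fun s => xs s b - xs s (Sum.inl i)) atTop
            (𝓝 (xb b - xb (Sum.inl i))) := (hxt b).sub (hxt (Sum.inl i))
        have h3 : xb b - xb (Sum.inl i) = 0 := by
          rw [hS b (htS hb), ← hc, sub_self]
        rw [h3] at h2
        simpa using h2.norm.pow 2
      have h4 := h1.const_mul C
      simpa using h4
    have hfin : mbar i ≤ 0 := by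
      have := le_of_tendsto_of_tendsto (hmlim i) hsum0 hmain
      exact this
    exact absurd hfin (not_le.mpr (hmbar i))
  -- main conclusion
  intro j
  have hnq : ∀ i, pbar j ≠ qbar i := by
    intro i
    have h := key i (Sum.inr j) (by simp)
    exact h
  refine ⟨hnq, ?_⟩
  set c : E2 := pbar j with hc
  set S : Finset (Fin N ⊕ Fin k) := Finset.univ.filter (fun b => xb b = c) with hSdef
  have hmemS : ∀ b, b ∈ S ↔ xb b = c := fun b => by simp [hSdef]
  have hjS : Sum.inr j ∈ S := (hmemS _).mpr rfl
  have hS : ∀ b ∈ S, xb b = c := fun b hb => (hmemS b).mp hb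
  have hSc : ∀ b, b ∉ S → xb b ≠ c := fun b hb h => hb ((hmemS b).mpr h)
  let IntF : ℕ → (Fin N ⊕ Fin k) → E2 := fun s b =>
    ∑ b' ∈ S.filter (· ≠ b), (Ms s b' / ‖xs s b - xs s b'‖ ^ 3) • (xs s b - xs s b')
  have hIntT : ∀ b ∈ S, Tendsto (fun s => IntF s b) atTop
      (𝓝 (c - ∑ b' ∈ Sᶜ, (Mb b' / ‖c - xb b'‖ ^ 3) • (c - xb b'))) :=
    fun b hb => cluster_tendsto Ms xs Mb xb hMt hxt hccs S c hS hSc b hb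
  set w : E2 := ∑ b' ∈ Sᶜ, (Mb b' / ‖c - xb b'‖ ^ 3) • (c - xb b') with hw
  set v : E2 := c - w with hv
  have h3law : ∀ s, ∑ b ∈ S, Ms s b • IntF s b = 0 := by
    intro s
    have h1 : ∑ b ∈ S, Ms s b • IntF s b
        = ∑ b ∈ S, ∑ b' ∈ S.filter (· ≠ b),
            Ms s b • ((Ms s b' / ‖xs s b - xs s b'‖ ^ 3) • (xs s b - xs s b')) :=
      Finset.sum_congr rfl fun b _ => Finset.smul_sum
    rw [h1]
    exact antisym_zero S _ (fun a b => G_antisym (Ms s) (xs s) a b)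
  have hv0 : v = 0 := by
    by_contra hvne
    have hvpos : 0 < ‖v‖ := norm_pos_iff.mpr hvne
    have hev : ∀ᶠ s in atTop, ∀ b, b ∈ S → ‖v - IntF s b‖ ≤ ‖v‖ / 2 := by
      rw [eventually_all]
      intro b
      rw [eventually_imp_distrib_left]
      intro hb
      have h1 : Tendsto (fun s => ‖v - IntF s b‖) atTop (𝓝 0) := by
        have h2 := (tendsto_const_nhds (x := v)).sub (hIntT b hb)
        simpa using h2.norm
      exact (h1.eventually_lt_const (by linarith)).mono fun s hs => hs.le
    obtain ⟨s, hs⟩ := hev.exists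
    have hsum : (∑ b ∈ S, Ms s b) • v = ∑ b ∈ S, Ms s b • (v - IntF s b) := by
      rw [Finset.sum_smul]
      have h1 : ∑ b ∈ S, Ms s b • (v - IntF s b)
          = ∑ b ∈ S, Ms s b • v - ∑ b ∈ S, Ms s b • IntF s b := by
        rw [← Finset.sum_sub_distrib]
        exact Finset.sum_congr rfl fun b _ => smul_sub _ _ _
      rw [h1, h3law s, sub_zero]
    have hMS : 0 < ∑ b ∈ S, Ms s b := Finset.sum_pos (fun b _ => hMpos s b) ⟨_, hjS⟩
    have hnorm : (∑ b ∈ S, Ms s b) * ‖v‖ ≤ (∑ b ∈ S, Ms s b) * (‖v‖ / 2) := by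
      have h1 : ‖(∑ b ∈ S, Ms s b) • v‖ = (∑ b ∈ S, Ms s b) * ‖v‖ := by
        rw [norm_smul, Real.norm_eq_abs, abs_of_pos hMS]
      have h2 : ‖∑ b ∈ S, Ms s b • (v - IntF s b)‖ ≤ ∑ b ∈ S, Ms s b * (‖v‖ / 2) := by
        refine (norm_sum_le _ _).trans (Finset.sum_le_sum fun b hb => ?_)
        rw [norm_smul, Real.norm_eq_abs, abs_of_pos (hMpos s b)]
        exact mul_le_mul_of_nonneg_left (hs b hb) (hMpos s b).le
      rw [← Finset.sum_mul] at h2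
      calc (∑ b ∈ S, Ms s b) * ‖v‖ = ‖(∑ b ∈ S, Ms s b) • v‖ := h1.symm
        _ = ‖∑ b ∈ S, Ms s b • (v - IntF s b)‖ := by rw [hsum]
        _ ≤ (∑ b ∈ S, Ms s b) * (‖v‖ / 2) := h2
    have := (mul_le_mul_iff_right₀ hMS).mp hnorm
    linarith
  have hcw : c = w := by rwa [hv, sub_eq_zero] at hv0
  have hwsum : w = ∑ i, (mbar i / ‖c - qbar i‖ ^ 3) • (c - qbar i) := by
    rw [hw]
    have hzero : ∀ b ∈ S, (Mb b / ‖c - xb b‖ ^ 3) • (c - xb b) = 0 := by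
      intro b hb
      rw [hS b hb]
      simp
    have hall : ∑ b' ∈ Sᶜ, (Mb b' / ‖c - xb b'‖ ^ 3) • (c - xb b')
        = ∑ b', (Mb b' / ‖c - xb b'‖ ^ 3) • (c - xb b') := by
      rw [← Finset.sum_add_sum_compl S (fun b' => (Mb b' / ‖c - xb b'‖ ^ 3) • (c - xb b'))]
      rw [Finset.sum_eq_zero hzero, zero_add]
    rw [hall, Fintype.sum_sum_type]
    have hinr : ∀ j' : Fin k,
        (Mb (Sum.inr j') / ‖c - xb (Sum.inr j')‖ ^ 3) • (c - xb (Sum.inr j')) = 0 := by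
      intro j'
      show ((0:ℝ) / _) • _ = 0
      rw [zero_div, zero_smul]
    rw [Finset.sum_eq_zero (fun j' _ => hinr j'), add_zero]
    rfl
  exact hcw.trans hwsum
end
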